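/- arXiv:2312.02639 — 4 statements merged into one kernel-verified Lean document; each statement's English description precedes it below -/
import Mathlib

section
/- For every finite simple graph G, hdim_{Z/2}(N(G)) ≥ ω(G) − 2; that is, if G contains a clique of size m, then the reduced homology H̃_k(N(G); Z/2) is nonzero for some k ≥ m − 2. -/
open SimpleGraph

/-- An abstract simplicial complex on the underlying vertex set `V`. -/
structure Cplx (V : Type) where
  faces : Finset V → Prop
  down_closed : ∀ ⦃σ τ : Finset V⦄, σ ⊆ τ → faces τ → faces σ

/-- The neighborhood complex of a graph: the faces are the subsets of the vertex set
contained in the open neighborhood of some vertex. -/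
def nbdCpx {V : Type} (G : SimpleGraph V) : Cplx V where
  faces σ := ∃ v : V, ∀ u ∈ σ, G.Adj v u
  down_closed := by
    rintro σ τ hst ⟨v, h⟩
    exact ⟨v, fun u hu => h u (hst hu)⟩

section Homology

variable {V : Type} [DecidableEq V] (K : Cplx V) (R : Type) [CommRing R]

/-- The (possibly degenerate) ordered `n`-simplices of `K`. -/
def Smpx (n : ℕ) : Type := {f : Fin (n + 1) → V // K.faces (Finset.image f Finset.univ)}

/-- The `i`-th face of an ordered simplex. -/
def Smpx.face {n : ℕ} (f : Smpx K (n + 1)) (i : Fin (n + 2)) : Smpx K n :=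
  ⟨f.1 ∘ Fin.succAbove i, by
    refine K.down_closed ?_ f.2
    intro x hx
    simp only [Finset.mem_image, Function.comp_apply] at hx ⊢
    obtain ⟨j, _, hj⟩ := hx
    exact ⟨_, Finset.mem_univ _, hj⟩⟩

/-- The simplicial boundary operator on the free modules of chains. -/
noncomputable def bdry (n : ℕ) : (Smpx K (n + 1) →₀ R) →ₗ[R] (Smpx K n →₀ R) :=
  Finsupp.linearCombination R fun f =>
    ∑ i : Fin (n + 2), ((-1 : R) ^ (i : ℕ)) • Finsupp.single (Smpx.face K f i) (1 : R)

/-- The augmentation map, into the free module on the unique `(-1)`-simplex. -/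
noncomputable def aug : (Smpx K 0 →₀ R) →ₗ[R] (Unit →₀ R) :=
  Finsupp.linearCombination R fun _ => Finsupp.single () (1 : R)

/-- Cycles: the kernels of the boundary maps of the augmented chain complex. -/
noncomputable def cyc : (n : ℕ) → Submodule R (Smpx K n →₀ R)
  | 0 => LinearMap.ker (aug K R)
  | n + 1 => LinearMap.ker (bdry K R n)

/-- Boundaries, viewed inside the cycles. -/
noncomputable def bsub (n : ℕ) : Submodule R ↥(cyc K R n) :=
  Submodule.comap (cyc K R n).subtype (LinearMap.range (bdry K R n))

/-- The reduced simplicial homology of `K` with coefficients in `R`, defined via the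
augmented chain complex of ordered simplices. -/
noncomputable def reducedHomology : ℤ → ModuleCat R
  | Int.ofNat n =>
      ModuleCat.of R
        (@HasQuotient.Quotient ↥(cyc K R n) (Submodule R ↥(cyc K R n))
          (@Submodule.hasQuotient R ↥(cyc K R n) _ _ _) (bsub K R n))
  | Int.negSucc 0 => ModuleCat.of R ((Unit →₀ R) ⧸ LinearMap.range (aug K R))
  | Int.negSucc (_ + 1) => ModuleCat.of R PUnit

/-- The `R`-homological dimension of a simplicial complex:
the supremum of the degrees with nonvanishing reduced homology, in `ℤ ∪ {±∞}`. -/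
noncomputable def hdim : EReal :=
  sSup {x : EReal | ∃ n : ℤ, x = ((n : ℝ) : EReal) ∧ Nontrivial (reducedHomology K R n)}

/-- The `R`-homological connectivity of a simplicial complex:
the supremum of the `n` such that all reduced homology in degrees `≤ n` vanishes. -/
noncomputable def conn : EReal :=
  sSup {x : EReal | ∃ n : ℤ, x = ((n : ℝ) : EReal) ∧
    ∀ i : ℤ, i ≤ n → Subsingleton (reducedHomology K R i)}

end Homology

set_option linter.unusedSectionVars false
set_option linter.unreachableTactic false
set_option linter.unusedTactic false
set_option linter.unusedVariables false

namespace NbdH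

open Finset

abbrev F2 := ZMod 2

lemma addSelf {M : Type*} [AddCommMonoid M] [Module F2 M] (x : M) : x + x = 0 := by
  have h2 : (2 : F2) = 0 := by decide
  calc x + x = (2 : F2) • x := (two_smul _ x).symm
    _ = 0 := by rw [h2, zero_smul]

lemma eq_of_add_eq_zero {M : Type*} [AddCommMonoid M] [Module F2 M] {x y : M}
    (h : x + y = 0) : x = y := by
  have := congrArg (· + y) h
  simp only [zero_add] at this
  calc x = x + (y + y) := by rw [addSelf, add_zero]
    _ = (x + y) + y := by rw [add_assoc]
    _ = y := by rw [h, zero_add]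

section Flat

variable {V : Type} [DecidableEq V]

/-- Flat module of pair-chains. -/
abbrev M (V : Type) := (Finset V × Finset V) →₀ F2

/-- boundary of the pair complex (with built-in augmentation cell `(∅,∅)`). -/
noncomputable def dP : M V →ₗ[F2] M V :=
  Finsupp.linearCombination F2 fun p =>
    (∑ x ∈ p.1, Finsupp.single (p.1.erase x, p.2) (1 : F2)) +
      ∑ y ∈ p.2, Finsupp.single (p.1, p.2.erase y) (1 : F2)

/-- The swap involution. -/
noncomputable def TP : M V →ₗ[F2] M V := Finsupp.lmapDomain F2 F2 Prod.swap

lemma dP_single (p : Finset V × Finset V) :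
    dP (Finsupp.single p (1 : F2)) =
      (∑ x ∈ p.1, Finsupp.single (p.1.erase x, p.2) (1 : F2)) +
        ∑ y ∈ p.2, Finsupp.single (p.1, p.2.erase y) (1 : F2) := by
  simp [dP, Finsupp.linearCombination_single]

lemma TP_single (p : Finset V × Finset V) (c : F2) :
    TP (Finsupp.single p c) = Finsupp.single p.swap c := by
  simp [TP, Finsupp.mapDomain_single]

lemma TP_TP (z : M V) : TP (TP z) = z := by
  have : (TP ∘ₗ TP : M V →ₗ[F2] M V) = LinearMap.id := by
    apply Finsupp.lhom_ext
    intro a b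
    simp [TP_single]
  exact congrArg (fun f => f z) (congrArg DFunLike.coe this)

lemma dP_TP (z : M V) : dP (TP z) = TP (dP z) := by
  have : (dP ∘ₗ TP : M V →ₗ[F2] M V) = TP ∘ₗ dP := by
    apply Finsupp.lhom_ext
    intro p b
    have hsingle : Finsupp.single p b = b • Finsupp.single p (1:F2) := by
      rw [Finsupp.smul_single, smul_eq_mul, mul_one]
    rw [hsingle]
    simp only [LinearMap.comp_apply, map_smul]
    congr 1
    rw [TP_single, dP_single, dP_single]
    simp only [map_add, map_sum, TP_single]
    simp only [Prod.swap]
    exact add_comm _ _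
  exact congrArg (fun f => f z) (congrArg DFunLike.coe this)

lemma sum_erase_erase (A : Finset V) (g : Finset V → M V) :
    ∑ x ∈ A, ∑ y ∈ A.erase x, g ((A.erase x).erase y) = 0 := by
  have key : ∑ q ∈ A.offDiag, g ((A.erase q.1).erase q.2) = 0 := by
    apply Finset.sum_involution (fun q _ => (q.2, q.1))
    · intro q hq
      have hne : q.1 ≠ q.2 := (Finset.mem_offDiag.mp hq).2.2
      have : (A.erase q.1).erase q.2 = (A.erase q.2).erase q.1 := by
        ext a; simp [Finset.mem_erase]; tauto
      rw [this]
      exact addSelf _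
    · intro q hq _
      have hne : q.1 ≠ q.2 := (Finset.mem_offDiag.mp hq).2.2
      intro hcontra
      exact hne (congrArg Prod.snd hcontra)
    · intro q hq
      rcases Finset.mem_offDiag.mp hq with ⟨h1, h2, h3⟩
      exact Finset.mem_offDiag.mpr ⟨h2, h1, fun h => h3 h.symm⟩
    · intro q hq; rfl
  calc ∑ x ∈ A, ∑ y ∈ A.erase x, g ((A.erase x).erase y)
      = ∑ x ∈ A, ∑ y ∈ A, if y ≠ x then g ((A.erase x).erase y) else 0 := by
        apply Finset.sum_congr rfl
        intro x _
        rw [← Finset.sum_filter, Finset.filter_ne']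
    _ = ∑ q ∈ A ×ˢ A, if q.2 ≠ q.1 then g ((A.erase q.1).erase q.2) else 0 := by
        rw [Finset.sum_product]
    _ = ∑ q ∈ (A ×ˢ A).filter (fun q => q.2 ≠ q.1), g ((A.erase q.1).erase q.2) := by
        rw [Finset.sum_filter]
    _ = ∑ q ∈ A.offDiag, g ((A.erase q.1).erase q.2) := by
        apply Finset.sum_congr _ (fun _ _ => rfl)
        ext q
        simp only [Finset.mem_offDiag, Finset.mem_filter, Finset.mem_product]
        tauto
    _ = 0 := key

lemma dP_dP (z : M V) : dP (dP z) = 0 := by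
  have : (dP ∘ₗ dP : M V →ₗ[F2] M V) = 0 := by
    apply Finsupp.lhom_ext
    intro p b
    have hsingle : Finsupp.single p b = b • Finsupp.single p (1:F2) := by
      rw [Finsupp.smul_single, smul_eq_mul, mul_one]
    rw [hsingle]
    simp only [LinearMap.comp_apply, map_smul, LinearMap.zero_apply]
    have key : dP (dP (Finsupp.single p (1:F2))) = 0 := by
      rw [dP_single]
      obtain ⟨A, B⟩ := p
      simp only [map_add, map_sum]
      have e1 : ∑ x ∈ A, dP (Finsupp.single (A.erase x, B) (1:F2)) =
          (∑ x ∈ A, ∑ y ∈ A.erase x, Finsupp.single ((A.erase x).erase y, B) (1:F2)) +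
            ∑ x ∈ A, ∑ y ∈ B, Finsupp.single (A.erase x, B.erase y) (1:F2) := by
        rw [← Finset.sum_add_distrib]
        apply Finset.sum_congr rfl
        intro x _
        rw [dP_single]
      have e2 : ∑ y ∈ B, dP (Finsupp.single (A, B.erase y) (1:F2)) =
          (∑ y ∈ B, ∑ x ∈ A, Finsupp.single (A.erase x, B.erase y) (1:F2)) +
            ∑ y ∈ B, ∑ y' ∈ B.erase y, Finsupp.single (A, (B.erase y).erase y') (1:F2) := by
        rw [← Finset.sum_add_distrib]
        apply Finset.sum_congr rfl
        intro y _
        rw [dP_single]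
      rw [e1, e2]
      have h1 : ∑ x ∈ A, ∑ y ∈ A.erase x, Finsupp.single ((A.erase x).erase y, B) (1:F2) = 0 :=
        sum_erase_erase A (fun s => Finsupp.single (s, B) (1:F2))
      have h4 : ∑ y ∈ B, ∑ y' ∈ B.erase y, Finsupp.single (A, (B.erase y).erase y') (1:F2) = 0 :=
        sum_erase_erase B (fun s => Finsupp.single (A, s) (1:F2))
      have h23 : ∑ x ∈ A, ∑ y ∈ B, Finsupp.single (A.erase x, B.erase y) (1:F2) =
          ∑ y ∈ B, ∑ x ∈ A, Finsupp.single (A.erase x, B.erase y) (1:F2) := Finset.sum_comm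
      rw [h1, h4, h23]
      rw [zero_add, add_zero]
      exact addSelf _
    rw [key, smul_zero]
  exact congrArg (fun f => f z) (congrArg DFunLike.coe this)

/-- augmentation: coefficient of the empty cell in the boundary. -/
noncomputable def eP : M V →ₗ[F2] F2 := Finsupp.lapply ((∅ : Finset V), (∅ : Finset V)) ∘ₗ dP

lemma eP_dP (z : M V) : eP (dP z) = 0 := by
  simp only [eP, LinearMap.comp_apply, dP_dP, Finsupp.lapply_apply, Finsupp.coe_zero,
    Pi.zero_apply]

end Flat

section Valid

variable {V : Type} [Fintype V] [DecidableEq V] (G : SimpleGraph V)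

attribute [local instance] Classical.propDecidable

/-- Validity of a pair cell in degree `n`. -/
def valid (n : ℕ) (p : Finset V × Finset V) : Prop :=
  p.1.card + p.2.card = n + 1 ∧ (∀ a ∈ p.1, ∀ b ∈ p.2, G.Adj a b) ∧
    (nbdCpx G).faces p.1 ∧ (nbdCpx G).faces p.2

/-- All cells of the support are valid of degree `n`. -/
def VS (n : ℕ) (z : M V) : Prop := ∀ p ∈ z.support, valid G n p

variable {G}

lemma valid_swap {n : ℕ} {p : Finset V × Finset V} (h : valid G n p) : valid G n p.swap := by
  obtain ⟨hc, ha, hf1, hf2⟩ := h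
  exact ⟨by simpa [add_comm] using hc, fun a ha' b hb' => (ha b hb' a ha').symm, hf2, hf1⟩

lemma zero_of_vs_empty {n : ℕ} {z : M V} (hvs : VS G n z)
    (hno : ∀ p, ¬ valid G n p) : z = 0 := by
  ext p
  by_contra h
  exact hno p (hvs p (Finsupp.mem_support_iff.mpr h))

lemma decomp {ι : Type*} (z : ι →₀ F2) : z = ∑ p ∈ z.support, Finsupp.single p (z p) := by
  conv_lhs => rw [← Finsupp.sum_single z]
  rfl

lemma eq_on_valid {ι : Type*} {N : Type*} [AddCommMonoid N] [Module F2 N]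
    (P Q : (ι →₀ F2) →ₗ[F2] N) (S : ι → Prop)
    (h : ∀ p, S p → P (Finsupp.single p 1) = Q (Finsupp.single p 1)) :
    ∀ z : ι →₀ F2, (∀ p ∈ z.support, S p) → P z = Q z := by
  intro z hz
  rw [decomp z, map_sum, map_sum]
  apply Finset.sum_congr rfl
  intro p hp
  have : Finsupp.single p (z p) = (z p) • Finsupp.single p (1:F2) := by
    rw [Finsupp.smul_single, smul_eq_mul, mul_one]
  rw [this, map_smul, map_smul, h p (hz p hp)]

lemma supp_lc {ι : Type*} (t : ι → M V) (z : ι →₀ F2) :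
    ∀ p ∈ (Finsupp.linearCombination F2 t z).support, ∃ i ∈ z.support, p ∈ (t i).support := by
  intro p hp
  rw [Finsupp.linearCombination_apply] at hp
  have := Finsupp.support_sum hp
  rw [Finset.mem_biUnion] at this
  obtain ⟨i, hi, hmem⟩ := this
  exact ⟨i, hi, Finsupp.support_smul hmem⟩

lemma supp_dP_single {p : Finset V × Finset V} :
    ∀ q ∈ (dP (Finsupp.single p (1:F2))).support,
      (∃ x ∈ p.1, q = (p.1.erase x, p.2)) ∨ ∃ y ∈ p.2, q = (p.1, p.2.erase y) := by
  intro q hq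
  rw [dP_single] at hq
  rcases Finset.mem_union.mp (Finsupp.support_add hq) with h | h
  · left
    obtain ⟨x, hx, hmem⟩ := Finset.mem_biUnion.mp (Finsupp.support_finset_sum h)
    exact ⟨x, hx, Finset.mem_singleton.mp (Finsupp.support_single_subset hmem)⟩
  · right
    obtain ⟨y, hy, hmem⟩ := Finset.mem_biUnion.mp (Finsupp.support_finset_sum h)
    exact ⟨y, hy, Finset.mem_singleton.mp (Finsupp.support_single_subset hmem)⟩

lemma valid_eraseA {n : ℕ} {p : Finset V × Finset V} (h : valid G (n+1) p) {x : V}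
    (hx : x ∈ p.1) : valid G n (p.1.erase x, p.2) := by
  obtain ⟨hc, ha, hf1, hf2⟩ := h
  refine ⟨?_, fun a ha' b hb' => ha a (Finset.mem_of_mem_erase ha') b hb',
    (nbdCpx G).down_closed (Finset.erase_subset _ _) hf1, hf2⟩
  have h1 : 1 ≤ p.1.card := Finset.card_pos.mpr ⟨x, hx⟩
  show (p.1.erase x).card + p.2.card = n + 1
  rw [Finset.card_erase_of_mem hx]
  omega

lemma valid_eraseB {n : ℕ} {p : Finset V × Finset V} (h : valid G (n+1) p) {y : V}
    (hy : y ∈ p.2) : valid G n (p.1, p.2.erase y) := by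
  have := valid_eraseA (valid_swap h) (by simpa using hy)
  simpa using valid_swap this

lemma VS_dP_single {n : ℕ} {p : Finset V × Finset V} (h : valid G (n+1) p) :
    VS G n (dP (Finsupp.single p (1:F2))) := by
  intro q hq
  rcases supp_dP_single q hq with ⟨x, hx, rfl⟩ | ⟨y, hy, rfl⟩
  · exact valid_eraseA h hx
  · exact valid_eraseB h hy

lemma VS_dP {n : ℕ} {z : M V} (h : VS G (n+1) z) : VS G n (dP z) := by
  intro q hq
  rw [decomp z, map_sum] at hq
  obtain ⟨p, hp, hmem⟩ := Finset.mem_biUnion.mp (Finsupp.support_finset_sum hq)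
  have : Finsupp.single p (z p) = (z p) • Finsupp.single p (1:F2) := by
    rw [Finsupp.smul_single, smul_eq_mul, mul_one]
  rw [this, map_smul] at hmem
  exact VS_dP_single (h p hp) q (Finsupp.support_smul hmem)

lemma VS_TP {n : ℕ} {z : M V} (h : VS G n z) : VS G n (TP z) := by
  intro q hq
  have := Finsupp.mapDomain_support (f := Prod.swap) (s := z) hq
  obtain ⟨p, hp, rfl⟩ := Finset.mem_image.mp this
  exact valid_swap (h p hp)

lemma VS_add {n : ℕ} {z w : M V} (hz : VS G n z) (hw : VS G n w) : VS G n (z + w) := by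
  intro q hq
  rcases Finset.mem_union.mp (Finsupp.support_add hq) with h | h
  · exact hz q h
  · exact hw q h

lemma valid_ne_swap {n : ℕ} {p : Finset V × Finset V} (h : valid G n p) : p ≠ p.swap := by
  intro hp
  have h12 : p.1 = p.2 := (congrArg Prod.snd hp).symm
  rcases Finset.eq_empty_or_nonempty p.1 with he | ⟨a, ha⟩
  · have := h.1
    rw [he, ← h12, he] at this
    simp at this
  · exact (G.loopless.irrefl a) (h.2.1 a ha a (h12 ▸ ha))

end Valid

section Psi

variable {V : Type} [Fintype V] [DecidableEq V] (G : SimpleGraph V)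

attribute [local instance] Classical.propDecidable

noncomputable def enc : Finset V × Finset V → ℕ := fun p => (Fintype.equivFin (Finset V × Finset V)) p

lemma enc_inj : Function.Injective (enc (V := V)) := by
  intro a b h
  exact (Fintype.equivFin _).injective (Fin.val_injective h)

def isRep (p : Finset V × Finset V) : Prop := enc p < enc p.swap

lemma isRep_iff_not {p : Finset V × Finset V} (h : p ≠ p.swap) : isRep p ↔ ¬ isRep p.swap := by
  unfold isRep
  rw [Prod.swap_swap]
  have hne : enc p ≠ enc p.swap := fun hc => h (enc_inj hc)
  omega

/-- the "W"-module `F2[Z2]`. -/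
abbrev Wm := F2 × F2

noncomputable def sW : Wm →ₗ[F2] Wm :=
  LinearMap.prod (LinearMap.fst F2 F2 F2 + LinearMap.snd F2 F2 F2)
    (LinearMap.fst F2 F2 F2 + LinearMap.snd F2 F2 F2)

noncomputable def swW : Wm →ₗ[F2] Wm :=
  LinearMap.prod (LinearMap.snd F2 F2 F2) (LinearMap.fst F2 F2 F2)

lemma sW_apply (u : Wm) : sW u = (u.1 + u.2, u.1 + u.2) := rfl

lemma swW_apply (u : Wm) : swW u = (u.2, u.1) := rfl

lemma eq_of_sW_eq_zero {u : Wm} (h : sW u = 0) : u.1 = u.2 := by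
  have h1 : u.1 + u.2 = 0 := congrArg Prod.fst h
  exact eq_of_add_eq_zero h1

/-- The recursively-constructed equivariant cochain `ψ`. -/
noncomputable def psi : ℕ → (M V →ₗ[F2] Wm)
  | 0 => Finsupp.linearCombination F2 fun p =>
      if valid G 0 p then (if p.2 = ∅ then ((1:F2),(0:F2)) else (0,1)) else 0
  | (n+1) => Finsupp.linearCombination F2 fun p =>
      if valid G (n+1) p then
        (if isRep p then ((psi n (dP (Finsupp.single p 1))).1, 0)
         else (0, (psi n (dP (Finsupp.single p.swap 1))).1))
      else 0

lemma psi_zero_single (p : Finset V × Finset V) :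
    psi G 0 (Finsupp.single p 1) =
      if valid G 0 p then (if p.2 = ∅ then ((1:F2),(0:F2)) else (0,1)) else 0 := by
  rw [psi, Finsupp.linearCombination_single, one_smul]

lemma psi_succ_single (n : ℕ) (p : Finset V × Finset V) :
    psi G (n+1) (Finsupp.single p 1) =
      if valid G (n+1) p then
        (if isRep p then ((psi G n (dP (Finsupp.single p 1))).1, 0)
         else (0, (psi G n (dP (Finsupp.single p.swap 1))).1))
      else 0 := by
  rw [psi, Finsupp.linearCombination_single, one_smul]

lemma psi_TP (n : ℕ) : ∀ z : M V, psi G n (TP z) = swW (psi G n z) := by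
  have : (psi G n ∘ₗ TP : M V →ₗ[F2] Wm) = swW ∘ₗ psi G n := by
    apply Finsupp.lhom_ext
    intro p b
    have hsingle : Finsupp.single p b = b • Finsupp.single p (1:F2) := by
      rw [Finsupp.smul_single, smul_eq_mul, mul_one]
    rw [hsingle]
    simp only [LinearMap.comp_apply, map_smul]
    congr 1
    rw [TP_single]
    match n with
    | 0 =>
      rw [psi_zero_single, psi_zero_single]
      by_cases hv : valid G 0 p
      · rw [if_pos hv, if_pos (valid_swap hv)]
        by_cases h2 : p.2 = ∅
        · have h1 : p.1 ≠ ∅ := by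
            intro hc
            have := hv.1
            rw [hc, h2] at this
            simp at this
          have : p.swap.2 = p.1 := rfl
          rw [if_pos h2, if_neg (by rw [this]; exact h1)]
          rfl
        · have h1 : p.1 = ∅ := by
            have hc := hv.1
            have : p.2.card = 1 := by
              have := Finset.card_pos.mpr (Finset.nonempty_of_ne_empty h2)
              omega
            have : p.1.card = 0 := by omega
            exact Finset.card_eq_zero.mp this
          rw [if_neg h2, if_pos (show p.swap.2 = ∅ from h1)]
          rfl
      · rw [if_neg hv, if_neg (fun hc => hv (by simpa using valid_swap hc))]
        simp [swW]
        rfl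
    | (k+1) =>
      rw [psi_succ_single, psi_succ_single]
      by_cases hv : valid G (k+1) p
      · have hne := valid_ne_swap hv
        rw [if_pos hv, if_pos (valid_swap hv)]
        by_cases hr : isRep p
        · have : ¬ isRep p.swap := (isRep_iff_not hne).mp hr
          rw [if_pos hr, if_neg this, Prod.swap_swap]
          rfl
        · have : isRep p.swap := by
            by_contra hc
            exact hr ((isRep_iff_not hne).mpr hc)
          rw [if_neg hr, if_pos this]
          rfl
      · rw [if_neg hv, if_neg (fun hc => hv (by simpa using valid_swap hc))]
        simp [swW]
        rfl
  intro z
  exact congrArg (fun f => f z) (congrArg DFunLike.coe this)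

lemma psi_eP : ∀ z : M V, VS G 0 z → (psi G 0 z).1 + (psi G 0 z).2 = eP z := by
  have base : ∀ p, valid G 0 p →
      ((LinearMap.fst F2 F2 F2 + LinearMap.snd F2 F2 F2) ∘ₗ psi G 0) (Finsupp.single p (1:F2))
        = eP (Finsupp.single p (1:F2)) := by
    intro p hv
    simp only [LinearMap.comp_apply]
    rw [psi_zero_single, if_pos hv]
    have hval : (LinearMap.fst F2 F2 F2 + LinearMap.snd F2 F2 F2)
        (if p.2 = ∅ then ((1:F2),(0:F2)) else (0,1)) = 1 := by
      by_cases h2 : p.2 = ∅ <;> simp [h2]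
    rw [hval]
    -- now compute eP (single p 1) = 1 for valid-0 p
    have hcard := hv.1
    rw [eP]
    simp only [LinearMap.comp_apply, Finsupp.lapply_apply]
    rw [dP_single]
    rcases Finset.eq_empty_or_nonempty p.2 with h2 | ⟨y, hy⟩
    · have h1 : ∃ v, p.1 = {v} := by
        rw [h2] at hcard
        simp at hcard
        exact Finset.card_eq_one.mp hcard
      obtain ⟨v, hv1⟩ := h1
      rw [hv1, h2]
      simp
    · have h2c : p.2.card = 1 := by
        have := Finset.card_pos.mpr ⟨y, hy⟩
        omega
      have h1 : p.1 = ∅ := Finset.card_eq_zero.mp (by omega)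
      obtain ⟨w, hw2⟩ := Finset.card_eq_one.mp h2c
      rw [h1, hw2]
      simp
  intro z hz
  have := eq_on_valid ((LinearMap.fst F2 F2 F2 + LinearMap.snd F2 F2 F2) ∘ₗ psi G 0) eP
    (valid G 0) base z hz
  simpa using this

lemma psi_step_aux (n : ℕ)
    (hdiag : ∀ p, valid G (n+1) p →
      (psi G n (dP (Finsupp.single p 1))).1 = (psi G n (dP (Finsupp.single p 1))).2) :
    ∀ z : M V, VS G (n+1) z → sW (psi G (n+1) z) = psi G n (dP z) := by
  have base : ∀ p, valid G (n+1) p →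
      (sW ∘ₗ psi G (n+1)) (Finsupp.single p (1:F2)) = (psi G n ∘ₗ dP) (Finsupp.single p (1:F2)) := by
    intro p hv
    simp only [LinearMap.comp_apply]
    rw [psi_succ_single, if_pos hv]
    by_cases hr : isRep p
    · rw [if_pos hr, sW_apply]
      have hd := hdiag p hv
      ext
      · simp
      · simpa using hd
    · rw [if_neg hr, sW_apply]
      have hrel : dP (Finsupp.single p (1:F2)) = TP (dP (Finsupp.single p.swap 1)) := by
        rw [← dP_TP, TP_single, Prod.swap_swap]
      have hd := hdiag p.swap (valid_swap hv)
      rw [hrel, psi_TP, swW_apply]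
      ext
      · simpa using hd
      · simp
  exact eq_on_valid (sW ∘ₗ psi G (n+1)) (psi G n ∘ₗ dP) (valid G (n+1)) base

lemma psi_compat : ∀ (n : ℕ) (z : M V), VS G (n+1) z → sW (psi G (n+1) z) = psi G n (dP z) := by
  intro n
  induction n with
  | zero =>
    apply psi_step_aux
    intro p hv
    have hvs : VS G 0 (dP (Finsupp.single p (1:F2))) := VS_dP_single hv
    have hsum := psi_eP G (dP (Finsupp.single p (1:F2))) hvs
    rw [eP_dP] at hsum
    exact eq_of_add_eq_zero hsum
  | succ k ih =>
    apply psi_step_aux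
    intro p hv
    have hvs : VS G (k+1) (dP (Finsupp.single p (1:F2))) := VS_dP_single hv
    have h0 := ih (dP (Finsupp.single p (1:F2))) hvs
    rw [dP_dP] at h0
    simp only [map_zero] at h0
    exact eq_of_sW_eq_zero h0

end Psi

section Cone

variable {V : Type} [Fintype V] [DecidableEq V]

attribute [local instance] Classical.propDecidable

noncomputable def coneA (v : V) : M V →ₗ[F2] M V :=
  Finsupp.linearCombination F2 fun p =>
    if v ∉ p.1 then Finsupp.single (insert v p.1, p.2) (1:F2) else 0

lemma coneA_single (v : V) (p : Finset V × Finset V) (h : v ∉ p.1) :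
    coneA v (Finsupp.single p (1:F2)) = Finsupp.single (insert v p.1, p.2) (1:F2) := by
  rw [coneA, Finsupp.linearCombination_single, one_smul, if_pos h]

lemma supp_coneA {v : V} {z : M V} :
    ∀ q ∈ (coneA v z).support, ∃ p ∈ z.support, v ∉ p.1 ∧ q = (insert v p.1, p.2) := by
  intro q hq
  obtain ⟨p, hp, hmem⟩ := supp_lc _ z q hq
  by_cases h : v ∉ p.1
  · rw [if_pos h] at hmem
    exact ⟨p, hp, h, (Finset.mem_singleton.mp (Finsupp.support_single_subset hmem))⟩
  · rw [if_neg h] at hmem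
    simp at hmem

lemma dP_coneA_single (v : V) (p : Finset V × Finset V) (h : v ∉ p.1) :
    dP (coneA v (Finsupp.single p (1:F2))) =
      Finsupp.single p (1:F2) + coneA v (dP (Finsupp.single p (1:F2))) := by
  obtain ⟨A, B⟩ := p
  simp only at h
  rw [coneA_single v (A, B) h, dP_single]
  simp only
  rw [Finset.sum_insert h]
  rw [Finset.erase_insert h]
  have hA : ∑ x ∈ A, Finsupp.single ((insert v A).erase x, B) (1:F2) =
      ∑ x ∈ A, Finsupp.single (insert v (A.erase x), B) (1:F2) := by
    apply Finset.sum_congr rfl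
    intro x hx
    have hxv : x ≠ v := fun hc => h (hc ▸ hx)
    rw [Finset.erase_insert_of_ne (Ne.symm hxv)]
  rw [hA, dP_single]
  simp only [map_add, map_sum]
  have hA2 : ∑ x ∈ A, coneA v (Finsupp.single (A.erase x, B) (1:F2)) =
      ∑ x ∈ A, Finsupp.single (insert v (A.erase x), B) (1:F2) := by
    apply Finset.sum_congr rfl
    intro x _
    exact coneA_single v (A.erase x, B) (fun hc => h (Finset.mem_of_mem_erase hc))
  have hB2 : ∑ y ∈ B, coneA v (Finsupp.single (A, B.erase y) (1:F2)) =
      ∑ y ∈ B, Finsupp.single (insert v A, B.erase y) (1:F2) := by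
    apply Finset.sum_congr rfl
    intro y _
    exact coneA_single v (A, B.erase y) h
  rw [hA2, hB2]
  abel

lemma dP_coneA (v : V) (z : M V) (h : ∀ p ∈ z.support, v ∉ p.1) :
    dP (coneA v z) = z + coneA v (dP z) := by
  have := eq_on_valid (dP ∘ₗ coneA v) (LinearMap.id + coneA v ∘ₗ dP) (fun p => v ∉ p.1)
    (fun p hp => by simpa using dP_coneA_single v p hp) z h
  simpa using this

end Cone

section Clique

variable {V : Type} [Fintype V] [DecidableEq V] {G : SimpleGraph V}
  {S : Finset V} {m : ℕ}

attribute [local instance] Classical.propDecidable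

variable (hcl : G.IsNClique m S) (hm : 2 ≤ m)

namespace CliqueData

variable (S) in
noncomputable def lst : List V := S.toList

variable (S) in
noncomputable def vtx (hS : S.Nonempty) (i : ℕ) : V := (lst S).getD i hS.choose

variable (S) in
noncomputable def Sj (j : ℕ) : Finset V := ((lst S).take j).toFinset

lemma lst_nodup : (lst S).Nodup := S.nodup_toList

include hcl

lemma lst_length : (lst S).length = m := by
  rw [lst, Finset.length_toList, hcl.2]

lemma Sj_subset_S (j : ℕ) : Sj S j ⊆ S := by
  intro x hx
  rw [Sj, List.mem_toFinset] at hx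
  exact Finset.mem_toList.mp (List.take_subset _ _ hx)

lemma vtx_eq (hS : S.Nonempty) {j : ℕ} (hj : j < m) :
    vtx S hS j = (lst S)[j]'(by rw [lst_length hcl]; exact hj) := by
  rw [vtx, List.getD_eq_getElem]

lemma vtx_mem_S (hS : S.Nonempty) {j : ℕ} (hj : j < m) : vtx S hS j ∈ S := by
  rw [vtx_eq hcl hS hj]
  exact Finset.mem_toList.mp (List.getElem_mem _)

lemma Sj_succ (hS : S.Nonempty) {j : ℕ} (hj : j < m) :
    Sj S (j+1) = insert (vtx S hS j) (Sj S j) := by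
  rw [Sj, Sj, List.take_succ]
  have hlt : j < (lst S).length := by rw [lst_length hcl]; exact hj
  rw [List.getElem?_eq_getElem hlt]
  rw [vtx_eq hcl hS hj]
  ext a
  simp only [List.toFinset_append, Finset.mem_union, List.mem_toFinset, Finset.mem_insert,
    Option.toList_some, List.mem_singleton]
  tauto

lemma vtx_not_mem_Sj (hS : S.Nonempty) {j : ℕ} (hj : j < m) : vtx S hS j ∉ Sj S j := by
  rw [vtx_eq hcl hS hj, Sj]
  intro hmem
  rw [List.mem_toFinset] at hmem
  obtain ⟨i, hi, hget⟩ := List.getElem_of_mem hmem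
  rw [List.length_take] at hi
  have hi2 : i < j := lt_of_lt_of_le hi (min_le_left _ _)
  have hilen : i < (lst S).length := by
    rw [lst_length hcl]; omega
  rw [List.getElem_take] at hget
  have := (List.Nodup.getElem_inj_iff (lst_nodup)).mp hget
  omega

lemma Sj_card {j : ℕ} (hj : j ≤ m) : (Sj S j).card = j := by
  rw [Sj, List.toFinset_card_of_nodup (List.Nodup.sublist (List.take_sublist _ _) lst_nodup),
    List.length_take, lst_length hcl]
  omega

lemma face_of_proper (hA : ∀ x ∈ A, x ∈ S) (hcard : A.card < m) : (nbdCpx G).faces A := by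
  have hAS : A ⊆ S := hA
  have : ¬ (S ⊆ A) := by
    intro hc
    have := Finset.card_le_card hc
    rw [hcl.2] at this
    omega
  obtain ⟨s, hsS, hsA⟩ := Finset.not_subset.mp this
  exact ⟨s, fun u hu => hcl.1 hsS (hAS hu) (fun hc => hsA (hc ▸ hu))⟩

noncomputable def lad (S : Finset V) (hS : S.Nonempty) : ℕ → M V
  | 0 => Finsupp.single ({vtx S hS 0}, (∅ : Finset V)) (1:F2)
  | (k+1) => coneA (vtx S hS (k+1)) (lad S hS k + TP (lad S hS k))

omit hcl in
lemma lad_succ (S : Finset V) (hS : S.Nonempty) (k : ℕ) :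
    lad S hS (k+1) = coneA (vtx S hS (k+1)) (lad S hS k + TP (lad S hS k)) := rfl

lemma supp_lad (hS : S.Nonempty) :
    ∀ k, k + 1 ≤ m → ∀ p ∈ (lad S hS k).support, p.1 ∪ p.2 ⊆ Sj S (k+1) := by
  intro k
  induction k with
  | zero =>
    intro h1 p hp
    have := Finsupp.support_single_subset hp
    rw [Finset.mem_singleton] at this
    subst this
    rw [Sj_succ hcl hS (by omega)]
    intro x hx
    simp only [Finset.mem_union, Finset.mem_singleton, Finset.notMem_empty, or_false] at hx
    subst hx
    exact Finset.mem_insert_self _ _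
  | succ k ih =>
    intro hk1 q hq
    rw [lad_succ] at hq
    obtain ⟨p, hp, hv, rfl⟩ := supp_coneA q hq
    have hsub : p.1 ∪ p.2 ⊆ Sj S (k+1) := by
      rcases Finset.mem_union.mp (Finsupp.support_add hp) with h | h
      · exact ih (by omega) p h
      · obtain ⟨r, hr, rfl⟩ := Finset.mem_image.mp (Finsupp.mapDomain_support (f := Prod.swap) h)
        have := ih (by omega) r hr
        intro x hx
        apply this
        rw [Finset.mem_union] at hx ⊢
        tauto
    rw [Sj_succ hcl hS (by omega)]
    intro x hx
    rw [Finset.mem_union] at hx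
    rcases hx with hx | hx
    · rcases Finset.mem_insert.mp hx with hx | hx
      · exact hx ▸ Finset.mem_insert_self _ _
      · exact Finset.mem_insert_of_mem (hsub (Finset.mem_union_left _ hx))
    · exact Finset.mem_insert_of_mem (hsub (Finset.mem_union_right _ hx))

lemma dP_lad0 (hS : S.Nonempty) :
    dP (lad S hS 0) = Finsupp.single ((∅ : Finset V), (∅ : Finset V)) (1:F2) := by
  rw [lad, dP_single]
  simp

lemma dP_lad (hS : S.Nonempty) :
    ∀ k, k + 1 < m → dP (lad S hS (k+1)) = lad S hS k + TP (lad S hS k) := by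
  intro k
  induction k with
  | zero =>
    intro hk
    rw [lad_succ]
    rw [dP_coneA _ _ ?hnotmem]
    case hnotmem =>
      intro p hp
      have hsub : p.1 ∪ p.2 ⊆ Sj S 1 := by
        rcases Finset.mem_union.mp (Finsupp.support_add hp) with h | h
        · exact supp_lad hcl hS 0 (by omega) p h
        · obtain ⟨r, hr, rfl⟩ := Finset.mem_image.mp (Finsupp.mapDomain_support (f := Prod.swap) h)
          have := supp_lad hcl hS 0 (by omega) r hr
          intro x hx
          apply this
          rw [Finset.mem_union] at hx ⊢
          tauto
      intro hc
      exact vtx_not_mem_Sj hcl hS (by omega : 1 < m) (hsub (Finset.mem_union_left _ hc))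
    have hz : dP (lad S hS 0 + TP (lad S hS 0)) = 0 := by
      rw [map_add, dP_TP, dP_lad0 hcl hS, TP_single]
      simp only [Prod.swap]
      exact addSelf _
    rw [hz, map_zero, add_zero]
  | succ k ih =>
    intro hk
    rw [lad_succ]
    rw [dP_coneA _ _ ?hnm]
    case hnm =>
      intro p hp
      have hsub : p.1 ∪ p.2 ⊆ Sj S (k+2) := by
        rcases Finset.mem_union.mp (Finsupp.support_add hp) with h | h
        · exact supp_lad hcl hS (k+1) (by omega) p h
        · obtain ⟨r, hr, rfl⟩ := Finset.mem_image.mp (Finsupp.mapDomain_support (f := Prod.swap) h)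
          have := supp_lad hcl hS (k+1) (by omega) r hr
          intro x hx
          apply this
          rw [Finset.mem_union] at hx ⊢
          tauto
      intro hc
      exact vtx_not_mem_Sj hcl hS (by omega : k + 2 < m) (hsub (Finset.mem_union_left _ hc))
    have hz : dP (lad S hS (k+1) + TP (lad S hS (k+1))) = 0 := by
      rw [map_add, dP_TP, ih (by omega)]
      rw [map_add, TP_TP]
      have : ∀ x y : M V, (x + y) + (y + x) = 0 := by
        intro x y
        have h1 : (x + y) + (y + x) = (x + x) + (y + y) := by abel
        rw [h1, addSelf, addSelf, add_zero]
      exact this _ _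
    rw [hz, map_zero, add_zero]

lemma VS_lad (hS : S.Nonempty) : ∀ k, k + 2 ≤ m → VS G k (lad S hS k) := by
  intro k
  induction k with
  | zero =>
    intro hk p hp
    have := Finsupp.support_single_subset hp
    rw [Finset.mem_singleton] at this
    subst this
    refine ⟨by simp, by simp, ?_, ?_⟩
    · apply face_of_proper hcl
      · intro x hx
        rw [Finset.mem_singleton] at hx
        exact hx ▸ vtx_mem_S hcl hS (by omega)
      · rw [Finset.card_singleton]; omega
    · exact face_of_proper hcl (by simp) (by simp; omega)
  | succ k ih =>
    intro hk q hq
    rw [lad_succ] at hq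
    obtain ⟨p, hp, hv, rfl⟩ := supp_coneA q hq
    have hvalid : valid G k p := by
      rcases Finset.mem_union.mp (Finsupp.support_add hp) with h | h
      · exact ih (by omega) p h
      · exact VS_TP (ih (by omega)) p h
    have hsub : p.1 ∪ p.2 ⊆ Sj S (k+1) := by
      rcases Finset.mem_union.mp (Finsupp.support_add hp) with h | h
      · exact supp_lad hcl hS k (by omega) p h
      · obtain ⟨r, hr, rfl⟩ := Finset.mem_image.mp (Finsupp.mapDomain_support (f := Prod.swap) h)
        have := supp_lad hcl hS k (by omega) r hr
        intro x hx
        apply this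
        rw [Finset.mem_union] at hx ⊢
        tauto
    have hvS : vtx S hS (k+1) ∈ S := vtx_mem_S hcl hS (by omega)
    have hp1S : p.1 ⊆ S := fun x hx => Sj_subset_S hcl _ (hsub (Finset.mem_union_left _ hx))
    have hp2S : p.2 ⊆ S := fun x hx => Sj_subset_S hcl _ (hsub (Finset.mem_union_right _ hx))
    refine ⟨?_, ?_, ?_, hvalid.2.2.2⟩
    · show (insert (vtx S hS (k+1)) p.1).card + p.2.card = (k+1) + 1
      rw [Finset.card_insert_of_notMem hv]
      have := hvalid.1
      omega
    · intro a ha b hb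
      rcases Finset.mem_insert.mp ha with heq | ha'
      · subst heq
        have hbS : b ∈ S := hp2S hb
        have hbne : vtx S hS (k+1) ≠ b := by
          intro hc
          apply vtx_not_mem_Sj hcl hS (by omega : k + 1 < m)
          exact hc ▸ (hsub (Finset.mem_union_right _ hb))
        exact hcl.1 hvS hbS hbne
      · exact hvalid.2.1 a ha' b hb
    · apply face_of_proper hcl
      · intro x hx
        rcases Finset.mem_insert.mp hx with rfl | hx'
        · exact hvS
        · exact hp1S hx'
      · rw [Finset.card_insert_of_notMem hv]
        have h1 : p.1.card ≤ k + 1 := by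
          have := hvalid.1; omega
        omega

lemma eP_lad0 (hS : S.Nonempty) : eP (lad S hS 0) = 1 := by
  rw [eP]
  simp only [LinearMap.comp_apply, Finsupp.lapply_apply]
  rw [dP_lad0 hcl hS]
  simp

end CliqueData

end Clique

section Descent

variable {V : Type} [Fintype V] [DecidableEq V] (G : SimpleGraph V) [Nonempty V]

attribute [local instance] Classical.propDecidable

noncomputable def wB (B : Finset V) : V :=
  if h : ∃ v : V, ∀ u ∈ B, G.Adj v u then h.choose else Classical.arbitrary V

lemma wB_spec {B : Finset V} (h : (nbdCpx G).faces B) : ∀ u ∈ B, G.Adj (wB G B) u := by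
  have h' : ∃ v : V, ∀ u ∈ B, G.Adj v u := h
  rw [wB, dif_pos h']
  exact h'.choose_spec

noncomputable def hop : M V →ₗ[F2] M V :=
  Finsupp.linearCombination F2 fun p =>
    if p.2.Nonempty ∧ wB G p.2 ∉ p.1 then Finsupp.single (insert (wB G p.2) p.1, p.2) (1:F2) else 0

lemma hop_single (p : Finset V × Finset V) :
    hop G (Finsupp.single p (1:F2)) =
      if p.2.Nonempty ∧ wB G p.2 ∉ p.1 then Finsupp.single (insert (wB G p.2) p.1, p.2) (1:F2)
      else 0 := by
  rw [hop, Finsupp.linearCombination_single, one_smul]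

lemma supp_linear (F : M V →ₗ[F2] M V) (z : M V) :
    ∀ q ∈ (F z).support, ∃ p ∈ z.support, q ∈ (F (Finsupp.single p (1:F2))).support := by
  intro q hq
  rw [decomp z, map_sum] at hq
  obtain ⟨p, hp, hmem⟩ := Finset.mem_biUnion.mp (Finsupp.support_finset_sum hq)
  have : Finsupp.single p (z p) = (z p) • Finsupp.single p (1:F2) := by
    rw [Finsupp.smul_single, smul_eq_mul, mul_one]
  rw [this, map_smul] at hmem
  exact ⟨p, hp, Finsupp.support_smul hmem⟩

lemma VS_hop {n : ℕ} {z : M V} (h : VS G n z) : VS G (n+1) (hop G z) := by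
  intro q hq
  obtain ⟨p, hp, hmem⟩ := supp_linear (hop G) z q hq
  rw [hop_single] at hmem
  by_cases hc : p.2.Nonempty ∧ wB G p.2 ∉ p.1
  · rw [if_pos hc] at hmem
    have hq' := Finset.mem_singleton.mp (Finsupp.support_single_subset hmem)
    subst hq'
    obtain ⟨hcard, hadj, hf1, hf2⟩ := h p hp
    have hwadj : ∀ u ∈ p.2, G.Adj (wB G p.2) u := wB_spec G hf2
    obtain ⟨b, hb⟩ := hc.1
    refine ⟨?_, ?_, ?_, hf2⟩
    · show (insert (wB G p.2) p.1).card + p.2.card = (n+1) + 1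
      rw [Finset.card_insert_of_notMem hc.2]
      omega
    · intro a ha b' hb'
      rcases Finset.mem_insert.mp ha with heq | ha'
      · exact heq ▸ hwadj b' hb'
      · exact hadj a ha' b' hb'
    · refine ⟨b, fun u hu => ?_⟩
      rcases Finset.mem_insert.mp hu with heq | hu'
      · exact heq ▸ (hwadj b hb).symm
      · exact (hadj u hu' b hb).symm
  · rw [if_neg hc] at hmem
    simp at hmem

/-- The per-cell homotopy identity, nonempty-B case. -/
lemma hop_cell {n : ℕ} {p : Finset V × Finset V} (hv : valid G n p) (hB : p.2.Nonempty) :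
    ∃ E : M V, dP (hop G (Finsupp.single p (1:F2))) =
        Finsupp.single p (1:F2) + hop G (dP (Finsupp.single p (1:F2))) + E ∧
      ∀ q ∈ E.support, q.2.card < p.2.card := by
  obtain ⟨A, B⟩ := p
  simp only at hB ⊢
  set w := wB G B with hw
  have hdPsp : dP (Finsupp.single (A, B) (1:F2)) =
      (∑ x ∈ A, Finsupp.single (A.erase x, B) (1:F2)) +
        ∑ y ∈ B, Finsupp.single (A, B.erase y) (1:F2) := dP_single (A, B)
  by_cases hwA : w ∉ A
  · -- main case
    have h1 : hop G (Finsupp.single (A, B) (1:F2)) = Finsupp.single (insert w A, B) (1:F2) := by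
      rw [hop_single, if_pos ⟨hB, hwA⟩]
    refine ⟨(∑ y ∈ B, Finsupp.single (insert w A, B.erase y) (1:F2)) +
        ∑ y ∈ B, hop G (Finsupp.single (A, B.erase y) (1:F2)), ?_, ?_⟩
    · rw [h1, dP_single]
      simp only
      rw [Finset.sum_insert hwA, Finset.erase_insert hwA]
      have hA : ∑ x ∈ A, Finsupp.single ((insert w A).erase x, B) (1:F2) =
          ∑ x ∈ A, Finsupp.single (insert w (A.erase x), B) (1:F2) := by
        apply Finset.sum_congr rfl
        intro x hx
        have hxv : w ≠ x := fun hc => hwA (hc ▸ hx)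
        rw [Finset.erase_insert_of_ne hxv]
      rw [hA, hdPsp, map_add, map_sum, map_sum]
      have hA2 : ∑ x ∈ A, hop G (Finsupp.single (A.erase x, B) (1:F2)) =
          ∑ x ∈ A, Finsupp.single (insert w (A.erase x), B) (1:F2) := by
        apply Finset.sum_congr rfl
        intro x _
        rw [hop_single, if_pos ⟨hB, fun hc => hwA (Finset.mem_of_mem_erase hc)⟩]
      rw [hA2]
      have hmain : ∀ u v s t : M V, u + (v + t) = u + (v + s) + (t + s) := by
        intro u v s t
        have h : u + (v + s) + (t + s) = (u + (v + t)) + (s + s) := by abel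
        rw [h, addSelf, add_zero]
      have h2 : ∀ u v s t : M V, u + v + t = u + (v + s) + (t + s) := by
        intro u v s t
        have h : u + (v + s) + (t + s) = (u + v + t) + (s + s) := by abel
        rw [h, addSelf, add_zero]
      first
      | exact hmain _ _ _ _
      | exact h2 _ _ _ _
      | (abel_nf; rw [two_smul]; rw [addSelf, add_zero])
      | (abel_nf; simp [two_smul, addSelf])
    · intro q hq
      rcases Finset.mem_union.mp (Finsupp.support_add hq) with h | h
      · obtain ⟨y, hy, hmem⟩ := Finset.mem_biUnion.mp (Finsupp.support_finset_sum h)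
        have := Finset.mem_singleton.mp (Finsupp.support_single_subset hmem)
        subst this
        simp only
        rw [Finset.card_erase_of_mem hy]
        have := Finset.card_pos.mpr ⟨y, hy⟩
        omega
      · obtain ⟨y, hy, hmem⟩ := Finset.mem_biUnion.mp (Finsupp.support_finset_sum h)
        rw [hop_single] at hmem
        by_cases hc : (A, B.erase y).2.Nonempty ∧ wB G (A, B.erase y).2 ∉ (A, B.erase y).1
        · rw [if_pos hc] at hmem
          have := Finset.mem_singleton.mp (Finsupp.support_single_subset hmem)
          subst this
          simp only
          rw [Finset.card_erase_of_mem hy]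
          have := Finset.card_pos.mpr ⟨y, hy⟩
          omega
        · rw [if_neg hc] at hmem
          simp at hmem
  · -- case w ∈ A
    push_neg at hwA
    have h1 : hop G (Finsupp.single (A, B) (1:F2)) = 0 := by
      rw [hop_single, if_neg (fun hc => hc.2 hwA)]
    refine ⟨∑ y ∈ B, hop G (Finsupp.single (A, B.erase y) (1:F2)), ?_, ?_⟩
    · rw [h1, map_zero]
      rw [hdPsp, map_add, map_sum, map_sum]
      have hA2 : ∑ x ∈ A, hop G (Finsupp.single (A.erase x, B) (1:F2)) =
          Finsupp.single (A, B) (1:F2) := by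
        have hterm : ∀ x ∈ A, hop G (Finsupp.single (A.erase x, B) (1:F2)) =
            if x = w then Finsupp.single (A, B) (1:F2) else 0 := by
          intro x hx
          by_cases hxw : x = w
          · subst hxw
            rw [if_pos rfl, hop_single,
              if_pos (⟨hB, Finset.notMem_erase _ _⟩ :
                ((A.erase w, B).2.Nonempty ∧ wB G (A.erase w, B).2 ∉ (A.erase w, B).1))]
            show Finsupp.single (insert w (A.erase w), B) (1:F2) = _
            rw [Finset.insert_erase hwA]
          · rw [if_neg hxw, hop_single,
              if_neg (show ¬ ((A.erase x, B).2.Nonempty ∧ wB G (A.erase x, B).2 ∉ (A.erase x, B).1)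
                from fun hc => hc.2 (Finset.mem_erase.mpr ⟨Ne.symm hxw, hwA⟩))]
        rw [Finset.sum_congr rfl hterm]
        rw [Finset.sum_ite_eq' A w (fun _ => Finsupp.single (A, B) (1:F2))]
        rw [if_pos hwA]
      rw [hA2]
      have h0 : ∀ a b : M V, a + (a + b) + b = 0 := by
        intro a b
        have h1 : a + (a + b) + b = (a + a) + (b + b) := by abel
        rw [h1, addSelf, addSelf, add_zero]
      first
      | exact (h0 _ _).symm
      | (abel_nf; simp [two_smul, addSelf])
    · intro q hq
      obtain ⟨y, hy, hmem⟩ := Finset.mem_biUnion.mp (Finsupp.support_finset_sum hq)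
      rw [hop_single] at hmem
      by_cases hc : (A, B.erase y).2.Nonempty ∧ wB G (A, B.erase y).2 ∉ (A, B.erase y).1
      · rw [if_pos hc] at hmem
        have := Finset.mem_singleton.mp (Finsupp.support_single_subset hmem)
        subst this
        simp only
        rw [Finset.card_erase_of_mem hy]
        have := Finset.card_pos.mpr ⟨y, hy⟩
        omega
      · rw [if_neg hc] at hmem
        simp at hmem

lemma hop_cell_empty {p : Finset V × Finset V} (hB : p.2 = ∅) :
    hop G (Finsupp.single p (1:F2)) = 0 ∧
      hop G (dP (Finsupp.single p (1:F2))) = 0 := by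
  constructor
  · rw [hop_single, if_neg (by rw [hB]; simp)]
  · rw [dP_single, hB]
    simp only [Finset.sum_empty, add_zero, map_sum]
    apply Finset.sum_eq_zero
    intro x _
    rw [hop_single, if_neg (by simp)]

lemma descent (n : ℕ) :
    ∀ (j : ℕ) (z : M V), VS G n z → dP z = 0 → (∀ p ∈ z.support, p.2.card ≤ j) →
      ∃ y z' : M V, VS G (n+1) y ∧ z' = z + dP y ∧ (∀ p ∈ z'.support, p.2 = ∅) ∧ VS G n z' := by
  intro j
  induction j with
  | zero =>
    intro z hvs _ hsupp
    refine ⟨0, z, by intro p hp; simp at hp, by simp, ?_, hvs⟩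
    intro p hp
    exact Finset.card_eq_zero.mp (Nat.le_zero.mp (hsupp p hp))
  | succ j ih =>
    intro z hvs hcyc hsupp
    set z₁ := z + dP (hop G z) with hz₁
    have hvs₁ : VS G n z₁ := VS_add hvs (VS_dP (VS_hop G hvs))
    have hcyc₁ : dP z₁ = 0 := by
      rw [hz₁, map_add, hcyc, dP_dP, add_zero]
    have hsupp₁ : ∀ p ∈ z₁.support, p.2.card ≤ j := by
      -- z₁ = L z where L = id + dP∘hop + hop∘dP (last vanishes on z)
      have hLz : z₁ = ((LinearMap.id : M V →ₗ[F2] M V) + dP ∘ₗ hop G + hop G ∘ₗ dP) z := by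
        simp only [LinearMap.add_apply, LinearMap.comp_apply, LinearMap.id_apply]
        rw [hcyc, map_zero, add_zero]
      intro q hq
      rw [hLz] at hq
      obtain ⟨p, hp, hmem⟩ := supp_linear _ z q hq
      have hvp := hvs p hp
      simp only [LinearMap.add_apply, LinearMap.comp_apply, LinearMap.id_apply] at hmem
      rcases Finset.eq_empty_or_nonempty p.2 with hBe | hBn
      · obtain ⟨he1, he2⟩ := hop_cell_empty G hBe
        rw [he1, map_zero, he2, add_zero, add_zero] at hmem
        have := Finset.mem_singleton.mp (Finsupp.support_single_subset hmem)
        subst this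
        rw [hBe]
        simp
      · obtain ⟨E, hE, hEsupp⟩ := hop_cell G hvp hBn
        have : Finsupp.single p (1:F2) + dP (hop G (Finsupp.single p 1)) +
            hop G (dP (Finsupp.single p 1)) = E := by
          rw [hE]
          have h2 : ∀ a b c : M V, a + (a + b + c) + b = c + (b + b) + (a + a) := by
            intro a b c; abel
          rw [h2]
          rw [addSelf, addSelf, add_zero, add_zero]
        rw [this] at hmem
        have hcard := hsupp p hp
        have := hEsupp q hmem
        omega
    obtain ⟨y₁, z', hy₁, hz', hsupp', hvs'⟩ := ih z₁ hvs₁ hcyc₁ hsupp₁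
    refine ⟨hop G z + y₁, z', VS_add (VS_hop G hvs) hy₁, ?_, hsupp', hvs'⟩
    rw [hz', hz₁, map_add]
    abel

end Descent

section Word

variable {V : Type} [Fintype V] [DecidableEq V] (G : SimpleGraph V) [Nonempty V]

attribute [local instance] Classical.propDecidable

noncomputable def cV : V → ℕ := fun v => ((Fintype.equivFin V) v : ℕ)

lemma cV_inj : Function.Injective (cV (V := V)) := fun a b h =>
  (Fintype.equivFin V).injective (Fin.val_injective h)

noncomputable def cInv : ℕ → V := Function.invFun cV

lemma cInv_cV (v : V) : cInv (cV v) = v := Function.leftInverse_invFun cV_inj v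

lemma card_image_cV {A : Finset V} {k : ℕ} (h : A.card = k) : (A.image cV).card = k := by
  rw [Finset.card_image_of_injective _ cV_inj, h]

/-- canonical increasing enumeration of a finset. -/
noncomputable def wordOf {n : ℕ} (A : Finset V) (h : A.card = n + 1) : Fin (n+1) → V :=
  fun i => cInv ((A.image cV).orderEmbOfFin (card_image_cV h) i)

lemma wordOf_mem {n : ℕ} {A : Finset V} (h : A.card = n + 1) (i : Fin (n+1)) :
    wordOf A h i ∈ A := by
  have := Finset.orderEmbOfFin_mem (A.image cV) (card_image_cV h) i
  obtain ⟨a, ha, hval⟩ := Finset.mem_image.mp this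
  rw [wordOf, ← hval, cInv_cV]
  exact ha

lemma cV_wordOf {n : ℕ} {A : Finset V} (h : A.card = n + 1) (i : Fin (n+1)) :
    cV (wordOf A h i) = (A.image cV).orderEmbOfFin (card_image_cV h) i := by
  have := Finset.orderEmbOfFin_mem (A.image cV) (card_image_cV h) i
  obtain ⟨a, ha, hval⟩ := Finset.mem_image.mp this
  rw [wordOf, ← hval, cInv_cV, hval]

lemma wordOf_inj {n : ℕ} {A : Finset V} (h : A.card = n + 1) :
    Function.Injective (wordOf A h) := by
  intro i j hij
  have := congrArg cV hij
  rw [cV_wordOf, cV_wordOf] at this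
  exact (A.image cV).orderEmbOfFin (card_image_cV h) |>.injective this

lemma wordOf_image {n : ℕ} {A : Finset V} (h : A.card = n + 1) :
    Finset.image (wordOf A h) Finset.univ = A := by
  apply Finset.eq_of_subset_of_card_le
  · intro x hx
    obtain ⟨i, _, rfl⟩ := Finset.mem_image.mp hx
    exact wordOf_mem h i
  · rw [Finset.card_image_of_injective _ (wordOf_inj h), Finset.card_univ, Fintype.card_fin, h]

lemma wordOf_face {n : ℕ} {A : Finset V} (h : A.card = n + 2) (i : Fin (n+2)) :
    (wordOf A h) ∘ i.succAbove =
      wordOf (A.erase (wordOf A h i))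
        (by rw [Finset.card_erase_of_mem (wordOf_mem h i), h]; omega) := by
  have herase : (A.erase (wordOf A h i)).image cV = (A.image cV).erase (cV (wordOf A h i)) :=
    Finset.image_erase cV_inj _ _
  have hkey : ((A.image cV).orderEmbOfFin (card_image_cV h)) ∘ i.succAbove =
      ((A.erase (wordOf A h i)).image cV).orderEmbOfFin
        (card_image_cV (by rw [Finset.card_erase_of_mem (wordOf_mem h i), h]; omega)) := by
    apply Finset.orderEmbOfFin_unique
    · intro j
      rw [herase]
      apply Finset.mem_erase.mpr
      constructor
      · show ((A.image cV).orderEmbOfFin (card_image_cV h)) (i.succAbove j) ≠ cV (wordOf A h i)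
        rw [← cV_wordOf h (i.succAbove j)]
        intro hc
        exact Fin.succAbove_ne i j (wordOf_inj h (cV_inj hc))
      · exact Finset.orderEmbOfFin_mem _ _ _
    · exact ((A.image cV).orderEmbOfFin (card_image_cV h)).strictMono.comp
        (Fin.strictMono_succAbove i)
  funext j
  show cInv _ = cInv _
  have := congrFun hkey j
  simp only [Function.comp_apply] at this ⊢
  rw [this]

/-- map from the problem's ordered chains to the flat pair chains. -/
noncomputable def muW (n : ℕ) : (Smpx (nbdCpx G) n →₀ F2) →ₗ[F2] M V :=
  Finsupp.linearCombination F2 fun f =>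
    if Function.Injective f.1 then
      Finsupp.single (Finset.image f.1 Finset.univ, (∅ : Finset V)) (1:F2) else 0

/-- map from flat pair chains (B = ∅ part) to the problem's ordered chains. -/
noncomputable def nuW (n : ℕ) : M V →ₗ[F2] (Smpx (nbdCpx G) n →₀ F2) :=
  Finsupp.linearCombination F2 fun p =>
    if h : p.2 = ∅ ∧ p.1.card = n+1 ∧ (nbdCpx G).faces p.1 then
      Finsupp.single (⟨wordOf p.1 h.2.1, by rw [wordOf_image h.2.1]; exact h.2.2⟩ :
        Smpx (nbdCpx G) n) (1:F2)
    else 0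

lemma muW_single (n : ℕ) (f : Smpx (nbdCpx G) n) :
    muW G n (Finsupp.single f (1:F2)) =
      if Function.Injective f.1 then
        Finsupp.single (Finset.image f.1 Finset.univ, (∅ : Finset V)) (1:F2) else 0 := by
  rw [muW, Finsupp.linearCombination_single, one_smul]

lemma bdry_single (n : ℕ) (f : Smpx (nbdCpx G) (n+1)) :
    bdry (nbdCpx G) F2 n (Finsupp.single f (1:F2)) =
      ∑ i : Fin (n+2), Finsupp.single (Smpx.face (nbdCpx G) f i) (1:F2) := by
  rw [bdry, Finsupp.linearCombination_single, one_smul]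
  have hneg : (-1 : F2) = 1 := by decide
  simp only [hneg, one_pow, one_smul]

lemma image_succAbove_univ {n : ℕ} (i : Fin (n+2)) :
    Finset.image i.succAbove Finset.univ = Finset.univ.erase i := by
  ext j
  simp only [Finset.mem_image, Finset.mem_univ, true_and, Finset.mem_erase, and_true]
  constructor
  · rintro ⟨k, rfl⟩
    exact Fin.succAbove_ne i k
  · intro hj
    obtain ⟨k, hk⟩ := Fin.exists_succAbove_eq hj
    exact ⟨k, hk⟩

lemma inj_off_iff {n : ℕ} {f : Fin (n+2) → V} {a b : Fin (n+2)} (hab : f a = f b)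
    (hne : a ≠ b) (hinj : Function.Injective (f ∘ a.succAbove)) :
    Function.Injective (f ∘ b.succAbove) := by
  intro x y hxy
  simp only [Function.comp_apply] at hxy
  by_contra hxyne
  have hux : b.succAbove x ≠ b := Fin.succAbove_ne b x
  have huy : b.succAbove y ≠ b := Fin.succAbove_ne b y
  have hvne : b.succAbove x ≠ b.succAbove y := fun hc => hxyne (Fin.succAbove_right_injective hc)
  -- f is injective on the complement of {a}; derive a contradiction
  have hinj' : ∀ u v : Fin (n+2), u ≠ a → v ≠ a → f u = f v → u = v := by
    intro u v hu hv huv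
    obtain ⟨u', hu'⟩ := Fin.exists_succAbove_eq hu
    obtain ⟨v', hv'⟩ := Fin.exists_succAbove_eq hv
    rw [← hu', ← hv'] at huv ⊢
    have := hinj (show (f ∘ a.succAbove) u' = (f ∘ a.succAbove) v' from huv)
    rw [this]
  set u := b.succAbove x
  set v := b.succAbove y
  by_cases hua : u = a
  · by_cases hva : v = a
    · exact hvne (hua.trans hva.symm)
    · have hfvb : f v = f b := by rw [← hxy, hua, hab]
      exact huy (hinj' v b hva (Ne.symm hne) hfvb)
  · by_cases hva : v = a
    · have hfub : f u = f b := by rw [hxy, hva, hab]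
      have : u = b := hinj' u b hua (Ne.symm hne) hfub
      exact hux this
    · exact hvne (hinj' u v hua hva hxy)

lemma image_off_eq {n : ℕ} {f : Fin (n+2) → V} {a b : Fin (n+2)} (hab : f a = f b)
    (hne : a ≠ b) :
    Finset.image (f ∘ a.succAbove) Finset.univ = Finset.image f Finset.univ := by
  have h1 : Finset.image (f ∘ a.succAbove) Finset.univ =
      Finset.image f (Finset.univ.erase a) := by
    rw [← image_succAbove_univ a, Finset.image_image]
  rw [h1]
  apply Finset.Subset.antisymm
  · exact Finset.image_subset_image (Finset.erase_subset _ _)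
  · intro x hx
    obtain ⟨j, _, rfl⟩ := Finset.mem_image.mp hx
    by_cases hja : j = a
    · subst hja
      rw [hab]
      exact Finset.mem_image_of_mem f (Finset.mem_erase.mpr ⟨Ne.symm hne, Finset.mem_univ b⟩)
    · exact Finset.mem_image_of_mem f (Finset.mem_erase.mpr ⟨hja, Finset.mem_univ j⟩)

/-- μ is a chain map. -/
lemma muW_bdry (n : ℕ) :
    ∀ w, muW G n (bdry (nbdCpx G) F2 n w) = dP (muW G (n+1) w) := by
  have key : ∀ f : Smpx (nbdCpx G) (n+1),
      muW G n (bdry (nbdCpx G) F2 n (Finsupp.single f (1:F2))) =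
        dP (muW G (n+1) (Finsupp.single f (1:F2))) := by
    intro f
    rw [bdry_single, map_sum, muW_single]
    by_cases hinj : Function.Injective f.1
    · rw [if_pos hinj, dP_single]
      simp only [Finset.sum_empty, add_zero]
      have hterm : ∀ i : Fin (n+2),
          muW G n (Finsupp.single (Smpx.face (nbdCpx G) f i) (1:F2)) =
            Finsupp.single ((Finset.image f.1 Finset.univ).erase (f.1 i), (∅:Finset V)) (1:F2) := by
        intro i
        rw [muW_single]
        have hfi : (Smpx.face (nbdCpx G) f i).1 = f.1 ∘ i.succAbove := rfl
        have hinj2 : Function.Injective (Smpx.face (nbdCpx G) f i).1 := by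
          rw [hfi]
          exact hinj.comp Fin.succAbove_right_injective
        rw [if_pos hinj2]
        congr 2
        rw [hfi, ← Finset.image_image, image_succAbove_univ,
          Finset.image_erase hinj]
      rw [Finset.sum_congr rfl (fun i _ => hterm i)]
      rw [← Finset.sum_image (g := f.1) (s := Finset.univ)
        (f := fun x => Finsupp.single ((Finset.image f.1 Finset.univ).erase x, (∅:Finset V)) (1:F2))
        (fun x _ y _ hxy => hinj hxy)]
    · rw [if_neg hinj, map_zero]
      obtain ⟨a, b, hab, hne⟩ := Function.not_injective_iff.mp hinj
      have hzero : ∀ i : Fin (n+2), i ≠ a → i ≠ b →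
          muW G n (Finsupp.single (Smpx.face (nbdCpx G) f i) (1:F2)) = 0 := by
        intro i hia hib
        rw [muW_single, if_neg]
        intro hc
        obtain ⟨a', ha'⟩ := Fin.exists_succAbove_eq (Ne.symm hia)
        obtain ⟨b', hb'⟩ := Fin.exists_succAbove_eq (Ne.symm hib)
        have : a' = b' := hc (show (Smpx.face (nbdCpx G) f i).1 a' = _ by
          show f.1 (i.succAbove a') = f.1 (i.succAbove b')
          rw [ha', hb', hab])
        rw [this] at ha'
        rw [ha'] at hb'
        exact hne (hb'.symm ▸ rfl)
      have hsplit : ∑ i : Fin (n+2), muW G n (Finsupp.single (Smpx.face (nbdCpx G) f i) (1:F2)) =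
          ∑ i ∈ ({a, b} : Finset (Fin (n+2))),
            muW G n (Finsupp.single (Smpx.face (nbdCpx G) f i) (1:F2)) := by
        symm
        apply Finset.sum_subset (Finset.subset_univ _)
        intro i _ hi
        simp only [Finset.mem_insert, Finset.mem_singleton] at hi
        push_neg at hi
        exact hzero i hi.1 hi.2
      rw [hsplit, Finset.sum_pair hne]
      have heqterm : muW G n (Finsupp.single (Smpx.face (nbdCpx G) f a) (1:F2)) =
          muW G n (Finsupp.single (Smpx.face (nbdCpx G) f b) (1:F2)) := by
        rw [muW_single, muW_single]
        have hfa : (Smpx.face (nbdCpx G) f a).1 = f.1 ∘ a.succAbove := rfl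
        have hfb : (Smpx.face (nbdCpx G) f b).1 = f.1 ∘ b.succAbove := rfl
        by_cases hi : Function.Injective (f.1 ∘ a.succAbove)
        · rw [if_pos (hfa ▸ hi), if_pos (hfb ▸ inj_off_iff hab hne hi)]
          congr 2
          rw [hfa, hfb, image_off_eq hab hne, image_off_eq hab.symm (Ne.symm hne)]
        · rw [if_neg (hfa ▸ hi), if_neg]
          rw [hfb]
          intro hc
          exact hi (inj_off_iff hab.symm (Ne.symm hne) hc)
      rw [heqterm, addSelf]
  intro w
  have := eq_on_valid (muW G n ∘ₗ bdry (nbdCpx G) F2 n) (dP ∘ₗ muW G (n+1))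
    (fun _ => True) (fun f _ => by simpa using key f) w (fun _ _ => trivial)
  simpa using this

lemma VS_muW (n : ℕ) (w : Smpx (nbdCpx G) n →₀ F2) : VS G n (muW G n w) := by
  intro q hq
  obtain ⟨f, _, hmem⟩ := supp_lc _ w q hq
  by_cases hinj : Function.Injective f.1
  · rw [if_pos hinj] at hmem
    have := Finset.mem_singleton.mp (Finsupp.support_single_subset hmem)
    subst this
    refine ⟨?_, by simp, f.2, ⟨Classical.arbitrary V, by simp⟩⟩
    show (Finset.image f.1 Finset.univ).card + (∅ : Finset V).card = n + 1
    rw [Finset.card_image_of_injective _ hinj, Finset.card_empty, Finset.card_univ,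
      Fintype.card_fin]
  · rw [if_neg hinj] at hmem
    simp at hmem

lemma nuW_single_valid (n : ℕ) {p : Finset V × Finset V}
    (h : p.2 = ∅ ∧ p.1.card = n+1 ∧ (nbdCpx G).faces p.1) :
    nuW G n (Finsupp.single p (1:F2)) =
      Finsupp.single (α := Smpx (nbdCpx G) n) (⟨wordOf p.1 h.2.1, by rw [wordOf_image h.2.1]; exact h.2.2⟩ :
        Smpx (nbdCpx G) n) (1:F2) := by
  rw [nuW, Finsupp.linearCombination_single, one_smul, dif_pos h]

lemma muW_nuW (n : ℕ) (z : M V) (hz : VS G n z) (hB : ∀ p ∈ z.support, p.2 = ∅) :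
    muW G n (nuW G n z) = z := by
  have key : ∀ p, (valid G n p ∧ p.2 = ∅) →
      (muW G n ∘ₗ nuW G n) (Finsupp.single p (1:F2)) =
        LinearMap.id (R := F2) (M := M V) (Finsupp.single p (1:F2)) := by
    rintro p ⟨hv, hB2⟩
    have hcond : p.2 = ∅ ∧ p.1.card = n+1 ∧ (nbdCpx G).faces p.1 := by
      refine ⟨hB2, ?_, hv.2.2.1⟩
      have := hv.1
      rw [hB2] at this
      simpa using this
    simp only [LinearMap.comp_apply, LinearMap.id_apply]
    erw [nuW_single_valid G n hcond, muW_single, if_pos (wordOf_inj hcond.2.1)]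
    show Finsupp.single (Finset.image (wordOf p.1 hcond.2.1) Finset.univ, (∅:Finset V)) (1:F2) = _
    rw [wordOf_image hcond.2.1]
    congr 1
    exact Prod.ext rfl hB2.symm
  have := eq_on_valid (muW G n ∘ₗ nuW G n) LinearMap.id (fun p => valid G n p ∧ p.2 = ∅)
    key z (fun p hp => ⟨hz p hp, hB p hp⟩)
  simpa using this

lemma bdry_nuW (n : ℕ) (z : M V) (hz : VS G (n+1) z) (hB : ∀ p ∈ z.support, p.2 = ∅) :
    bdry (nbdCpx G) F2 n (nuW G (n+1) z) = nuW G n (dP z) := by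
  have key : ∀ p, (valid G (n+1) p ∧ p.2 = ∅) →
      (bdry (nbdCpx G) F2 n ∘ₗ nuW G (n+1)) (Finsupp.single p (1:F2)) =
        (nuW G n ∘ₗ dP) (Finsupp.single p (1:F2)) := by
    rintro ⟨A, B⟩ ⟨hv, hB2⟩
    simp only at hB2
    subst hB2
    have hcard : A.card = n+2 := by
      have := hv.1
      simpa using this
    have hcond : ((A, (∅:Finset V)).2 = ∅ ∧ (A, (∅:Finset V)).1.card = (n+1)+1 ∧
        (nbdCpx G).faces (A, (∅:Finset V)).1) := ⟨rfl, hcard, hv.2.2.1⟩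
    have hfacesA : (nbdCpx G).faces A := hv.2.2.1
    simp only [LinearMap.comp_apply]
    erw [nuW_single_valid G (n+1) hcond, bdry_single, dP_single]
    simp only [Finset.sum_empty, add_zero, map_sum]
    -- the common comparison function
    set g : V → (Smpx (nbdCpx G) n →₀ F2) := fun x =>
      if hx : x ∈ A then
        Finsupp.single (⟨wordOf (A.erase x)
            (by rw [Finset.card_erase_of_mem hx, hcard]; omega),
          (by rw [wordOf_image]
              exact (nbdCpx G).down_closed (Finset.erase_subset _ _) hfacesA)⟩ :
          Smpx (nbdCpx G) n) (1:F2)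
      else 0 with hg
    have hL : ∀ i : Fin (n+2),
        Finsupp.single (Smpx.face (nbdCpx G)
          (⟨wordOf (A, (∅:Finset V)).1 hcond.2.1, (by rw [wordOf_image hcond.2.1]; exact hcond.2.2)⟩ :
            Smpx (nbdCpx G) (n+1)) i) (1:F2) = g (wordOf A hcond.2.1 i) := by
      intro i
      rw [hg]
      simp only
      rw [dif_pos (wordOf_mem hcond.2.1 i)]
      congr 1
      apply Subtype.ext
      show (wordOf A hcond.2.1) ∘ i.succAbove = _
      rw [wordOf_face hcond.2.1 i]
    have hR : ∀ x ∈ A, nuW G n (Finsupp.single (A.erase x, (∅:Finset V)) (1:F2)) = g x := by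
      intro x hx
      have hcond2 : ((A.erase x, (∅:Finset V)).2 = ∅ ∧
          (A.erase x, (∅:Finset V)).1.card = n+1 ∧
          (nbdCpx G).faces (A.erase x, (∅:Finset V)).1) := by
        refine ⟨rfl, ?_, (nbdCpx G).down_closed (Finset.erase_subset _ _) hfacesA⟩
        show (A.erase x).card = n + 1
        rw [Finset.card_erase_of_mem hx, hcard]
        omega
      rw [nuW_single_valid G n hcond2, hg]
      simp only
      rw [dif_pos hx]
    rw [Finset.sum_congr rfl (fun i _ => hL i), Finset.sum_congr rfl hR]
    rw [← Finset.sum_image (g := wordOf A hcond.2.1) (s := Finset.univ) (f := g)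
      (fun x _ y _ hxy => wordOf_inj hcond.2.1 hxy)]
    rw [wordOf_image hcond.2.1]
  have := eq_on_valid (bdry (nbdCpx G) F2 n ∘ₗ nuW G (n+1)) (nuW G n ∘ₗ dP)
    (fun p => valid G (n+1) p ∧ p.2 = ∅) key z (fun p hp => ⟨hz p hp, hB p hp⟩)
  simpa using this

lemma aug_nuW (z : M V) (hz : VS G 0 z) (hB : ∀ p ∈ z.support, p.2 = ∅) :
    aug (nbdCpx G) F2 (nuW G 0 z) = Finsupp.single () (eP z) := by
  have key : ∀ p, (valid G 0 p ∧ p.2 = ∅) →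
      (aug (nbdCpx G) F2 ∘ₗ nuW G 0) (Finsupp.single p (1:F2)) =
        (Finsupp.lsingle () ∘ₗ eP) (Finsupp.single p (1:F2)) := by
    rintro p ⟨hv, hB2⟩
    have hcond : p.2 = ∅ ∧ p.1.card = 0+1 ∧ (nbdCpx G).faces p.1 := by
      refine ⟨hB2, ?_, hv.2.2.1⟩
      have := hv.1
      rw [hB2] at this
      simpa using this
    simp only [LinearMap.comp_apply]
    rw [nuW_single_valid G 0 hcond]
    erw [aug, Finsupp.linearCombination_single, one_smul]
    -- compute eP (single p 1) = 1
    have heP : eP (Finsupp.single p (1:F2)) = 1 := by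
      rw [eP]
      simp only [LinearMap.comp_apply, Finsupp.lapply_apply]
      rw [dP_single]
      obtain ⟨v, hv1⟩ := Finset.card_eq_one.mp hcond.2.1
      have : p = ({v}, (∅ : Finset V)) := Prod.ext (by rw [hv1]) hB2
      rw [this]
      simp
    rw [heP]
    simp [Finsupp.lsingle]
  have := eq_on_valid (aug (nbdCpx G) F2 ∘ₗ nuW G 0) (Finsupp.lsingle () ∘ₗ eP)
    (fun p => valid G 0 p ∧ p.2 = ∅) key z (fun p hp => ⟨hz p hp, hB p hp⟩)
  simpa using this

end Word

section Fill

variable {V : Type} [Fintype V] [DecidableEq V] (G : SimpleGraph V) [Nonempty V]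

attribute [local instance] Classical.propDecidable

lemma cycle_bound_of_subsingleton (n : ℕ)
    (h : Subsingleton (reducedHomology (nbdCpx G) F2 (Int.ofNat n))) :
    ∀ z ∈ cyc (nbdCpx G) F2 n, ∃ w, bdry (nbdCpx G) F2 n w = z := by
  intro z hz
  have hsub : Subsingleton
      (@HasQuotient.Quotient ↥(cyc (nbdCpx G) F2 n) (Submodule F2 ↥(cyc (nbdCpx G) F2 n))
        (@Submodule.hasQuotient F2 ↥(cyc (nbdCpx G) F2 n) _ _ _) (bsub (nbdCpx G) F2 n)) := h
  have htop := Submodule.Quotient.subsingleton_iff.mp hsub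
  have hmem : (⟨z, hz⟩ : ↥(cyc (nbdCpx G) F2 n)) ∈ bsub (nbdCpx G) F2 n := by
    rw [htop]; trivial
  rw [bsub, Submodule.mem_comap] at hmem
  obtain ⟨w, hw⟩ := hmem
  exact ⟨w, hw⟩

lemma add_cancel_left (a b : M V) : a + (b + a) = b := by
  rw [add_comm b a, ← add_assoc, addSelf, zero_add]

lemma fill (n : ℕ)
    (h : Subsingleton (reducedHomology (nbdCpx G) F2 (Int.ofNat n))) :
    ∀ z : M V, VS G n z → dP z = 0 → ∃ y, VS G (n+1) y ∧ dP y = z := by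
  intro z hvs hcyc
  obtain ⟨y₀, z', hy₀, hz', hsupp', hvs'⟩ := descent G n (n+1) z hvs hcyc
    (fun p hp => by
      have := (hvs p hp).1
      omega)
  have hcyc' : dP z' = 0 := by
    rw [hz', map_add, hcyc, dP_dP, add_zero]
  match n, h, hvs', hsupp', hcyc', hz' with
  | 0, h, hvs', hsupp', hcyc', hz' =>
    have hker : nuW G 0 z' ∈ cyc (nbdCpx G) F2 0 := by
      show nuW G 0 z' ∈ LinearMap.ker (aug (nbdCpx G) F2)
      rw [LinearMap.mem_ker, aug_nuW G z' hvs' hsupp']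
      have heP : eP z' = 0 := by
        rw [eP]
        simp only [LinearMap.comp_apply, hcyc', Finsupp.lapply_apply, Finsupp.coe_zero,
          Pi.zero_apply]
      rw [heP, Finsupp.single_zero]
    obtain ⟨w, hw⟩ := cycle_bound_of_subsingleton G 0 h _ hker
    refine ⟨y₀ + muW G 1 w, VS_add hy₀ (VS_muW G 1 w), ?_⟩
    rw [map_add, ← muW_bdry G 0 w, hw, muW_nuW G 0 z' hvs' hsupp', hz']
    exact add_cancel_left _ _
  | (k+1), h, hvs', hsupp', hcyc', hz' =>
    have hker : nuW G (k+1) z' ∈ cyc (nbdCpx G) F2 (k+1) := by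
      show nuW G (k+1) z' ∈ LinearMap.ker (bdry (nbdCpx G) F2 k)
      rw [LinearMap.mem_ker, bdry_nuW G k z' hvs' hsupp', hcyc', map_zero]
    obtain ⟨w, hw⟩ := cycle_bound_of_subsingleton G (k+1) h _ hker
    refine ⟨y₀ + muW G (k+2) w, VS_add hy₀ (VS_muW G (k+2) w), ?_⟩
    rw [map_add, ← muW_bdry G (k+1) w, hw, muW_nuW G (k+1) z' hvs' hsupp', hz']
    exact add_cancel_left _ _

end Fill

section Assemble

variable {V : Type} [Fintype V] [DecidableEq V] {G : SimpleGraph V} {S : Finset V} {m : ℕ}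

attribute [local instance] Classical.propDecidable

open CliqueData

noncomputable def ABig (G : SimpleGraph V) (S : Finset V) (hS : S.Nonempty) (m : ℕ) : ℕ → M V
  | 0 => lad S hS 0
  | (k+1) =>
    if k+1 ≤ m-2 then lad S hS (k+1)
    else if h : ∃ y : M V, VS G (k+1) y ∧
        dP y = ABig G S hS m k + TP (ABig G S hS m k) then h.choose else 0

variable (hcl : G.IsNClique m S) (hm : 2 ≤ m)

lemma ABig_eq_lad (hS : S.Nonempty) : ∀ k, k ≤ m - 2 → ABig G S hS m k = lad S hS k := by
  intro k hk
  match k with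
  | 0 => rfl
  | (j+1) =>
    show (if j+1 ≤ m-2 then lad S hS (j+1) else _) = _
    rw [if_pos hk]

include hcl hm in
lemma ABig_spec (hS : S.Nonempty)
    (hfill : ∀ n : ℕ, m - 2 ≤ n → ∀ z : M V, VS G n z → dP z = 0 →
      ∃ y, VS G (n+1) y ∧ dP y = z) :
    ∀ k, VS G k (ABig G S hS m k) ∧
      (∀ j, j + 1 = k → dP (ABig G S hS m k) = ABig G S hS m j + TP (ABig G S hS m j)) := by
  intro k
  induction k with
  | zero =>
    constructor
    · show VS G 0 (lad S hS 0)
      exact VS_lad hcl hS 0 (by omega)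
    · intro j hj; omega
  | succ k ih =>
    by_cases hk : k + 1 ≤ m - 2
    · have he : ABig G S hS m (k+1) = lad S hS (k+1) := ABig_eq_lad hS (k+1) hk
      constructor
      · rw [he]
        exact VS_lad hcl hS (k+1) (by omega)
      · intro j hj
        have hjk : j = k := by omega
        subst hjk
        rw [he, ABig_eq_lad hS j (by omega)]
        exact dP_lad hcl hS j (by omega)
    · have hz0 : dP (ABig G S hS m k + TP (ABig G S hS m k)) = 0 := by
        rw [map_add, dP_TP]
        match k, ih with
        | 0, ih =>
          have h0 : ABig G S hS m 0 = lad S hS 0 := rfl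
          rw [h0, dP_lad0 hcl hS, TP_single]
          simp only [Prod.swap]
          exact addSelf _
        | (j+1), ih =>
          rw [ih.2 j rfl]
          rw [map_add, TP_TP]
          have habcd : ∀ x y : M V, (x + y) + (y + x) = 0 := by
            intro x y
            have h1 : (x + y) + (y + x) = (x + x) + (y + y) := by abel
            rw [h1, addSelf, addSelf, add_zero]
          exact habcd _ _
      have hvsz : VS G k (ABig G S hS m k + TP (ABig G S hS m k)) :=
        VS_add ih.1 (VS_TP ih.1)
      have hex : ∃ y : M V, VS G (k+1) y ∧
          dP y = ABig G S hS m k + TP (ABig G S hS m k) :=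
        hfill k (by omega) _ hvsz hz0
      have he : ABig G S hS m (k+1) = hex.choose := by
        show (if k+1 ≤ m-2 then lad S hS (k+1) else _) = _
        rw [if_neg hk, dif_pos hex]
      constructor
      · rw [he]; exact hex.choose_spec.1
      · intro j hj
        have hjk : j = k := by omega
        subst hjk
        rw [he]; exact hex.choose_spec.2

include hcl hm in
lemma main_contradiction (hS : S.Nonempty)
    (hfill : ∀ n : ℕ, m - 2 ≤ n → ∀ z : M V, VS G n z → dP z = 0 →
      ∃ y, VS G (n+1) y ∧ dP y = z) : False := by
  have hspec := ABig_spec hcl hm hS hfill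
  have hu : ∀ k, (psi G k (ABig G S hS m k)).1 + (psi G k (ABig G S hS m k)).2 = 1 := by
    intro k
    induction k with
    | zero =>
      have h0 : ABig G S hS m 0 = lad S hS 0 := rfl
      rw [h0, psi_eP G _ (VS_lad hcl hS 0 (by omega)), eP_lad0 hcl hS]
    | succ k ih =>
      have hcompat := psi_compat G k (ABig G S hS m (k+1)) (hspec (k+1)).1
      rw [(hspec (k+1)).2 k rfl, map_add, psi_TP] at hcompat
      have h1 := congrArg Prod.fst hcompat
      rw [sW_apply] at h1
      simp only [Prod.fst_add, swW_apply] at h1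
      rw [h1, ih]
  set K := 2 * Fintype.card V + 1 with hK
  have hnoval : ∀ p : Finset V × Finset V, ¬ valid G K p := by
    intro p hp
    have h1 : p.1.card ≤ Fintype.card V := Finset.card_le_univ p.1
    have h2 : p.2.card ≤ Fintype.card V := Finset.card_le_univ p.2
    have := hp.1
    omega
  have hzero : ABig G S hS m K = 0 := zero_of_vs_empty (hspec K).1 hnoval
  have := hu K
  rw [hzero, map_zero] at this
  simp at this

end Assemble

end NbdH

/-- Lemma 4.4: for every finite simple graph `G`,
`hdim_{ℤ/2}(N(G)) ≥ ω(G) - 2`. -/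
theorem hdim_nbd_ge_cliqueNum_sub_two {V : Type} [Fintype V] [DecidableEq V]
    (G : SimpleGraph V) :
    ((G.cliqueNum : ℝ) : EReal) - 2 ≤ hdim (nbdCpx G) (ZMod 2) := by
  classical
  by_cases hsmall : G.cliqueNum ≤ 1
  · -- no edges: H̃₋₁ ≠ 0
    have hempty : IsEmpty (Smpx (nbdCpx G) 0) := by
      constructor
      intro f
      obtain ⟨v, hv⟩ := f.2
      have hadj : G.Adj v (f.1 0) := hv _ (Finset.mem_image_of_mem _ (Finset.mem_univ 0))
      have hne : v ≠ f.1 0 := G.ne_of_adj hadj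
      have hcliq : G.IsClique (({v, f.1 0} : Finset V) : Set V) := by
        intro x hx y hy hxy
        simp only [Finset.coe_insert, Set.mem_insert_iff, Finset.coe_singleton,
          Set.mem_singleton_iff] at hx hy
        rcases hx with rfl | rfl <;> rcases hy with rfl | rfl
        · exact absurd rfl hxy
        · exact hadj
        · exact hadj.symm
        · exact absurd rfl hxy
      have hcard : ({v, f.1 0} : Finset V).card = 2 := Finset.card_pair hne
      have h2 : 2 ≤ G.cliqueNum := by
        have := SimpleGraph.IsClique.card_le_cliqueNum (G := G) (t := {v, f.1 0}) (tc := hcliq)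
        omega
      omega
    have hzero : ∀ x : (Smpx (nbdCpx G) 0 →₀ ZMod 2), x = 0 := by
      intro x
      ext s
      exact (hempty.false s).elim
    have hrange : LinearMap.range (aug (nbdCpx G) (ZMod 2)) = ⊥ := by
      rw [Submodule.eq_bot_iff]
      rintro y ⟨x, rfl⟩
      rw [hzero x, map_zero]
    have hnt : Nontrivial (reducedHomology (nbdCpx G) (ZMod 2) (Int.negSucc 0)) := by
      show Nontrivial ((Unit →₀ ZMod 2) ⧸ LinearMap.range (aug (nbdCpx G) (ZMod 2)))
      refine ⟨Submodule.Quotient.mk (Finsupp.single () (1 : ZMod 2)), 0, ?_⟩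
      intro hc
      have := (Submodule.Quotient.mk_eq_zero _).mp hc
      rw [hrange, Submodule.mem_bot] at this
      exact one_ne_zero (Finsupp.single_eq_zero.mp this)
    have hmem : (((Int.negSucc 0 : ℤ) : ℝ) : EReal) ∈
        {x : EReal | ∃ n : ℤ, x = ((n : ℝ) : EReal) ∧
          Nontrivial (reducedHomology (nbdCpx G) (ZMod 2) n)} :=
      ⟨Int.negSucc 0, rfl, hnt⟩
    have hle : (((Int.negSucc 0 : ℤ) : ℝ) : EReal) ≤ hdim (nbdCpx G) (ZMod 2) := le_sSup hmem
    refine le_trans ?_ hle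
    have hco : ((Int.negSucc 0 : ℤ) : ℝ) = -1 := by norm_num
    rw [hco]
    have h1 : ((G.cliqueNum : ℝ) : EReal) - 2 = (((G.cliqueNum : ℝ) - 2 : ℝ) : EReal) := by
      rw [EReal.coe_sub]
      congr 1
    rw [h1]
    rw [EReal.coe_le_coe_iff]
    have : (G.cliqueNum : ℝ) ≤ 1 := by exact_mod_cast hsmall
    linarith
  · push_neg at hsmall
    obtain ⟨S, hcl⟩ := G.exists_isNClique_cliqueNum
    have hm : 2 ≤ G.cliqueNum := hsmall
    have hS : S.Nonempty := by
      rw [← Finset.card_pos, hcl.2]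
      omega
    have hNV : Nonempty V := ⟨hS.choose⟩
    by_contra hcon
    rw [not_le] at hcon
    have hfill : ∀ n : ℕ, G.cliqueNum - 2 ≤ n → ∀ z : NbdH.M V, NbdH.VS G n z →
        NbdH.dP z = 0 → ∃ y, NbdH.VS G (n+1) y ∧ NbdH.dP y = z := by
      intro n hn
      apply NbdH.fill G n
      by_contra hns
      rw [not_subsingleton_iff_nontrivial] at hns
      have hmem : (((Int.ofNat n : ℤ) : ℝ) : EReal) ∈
          {x : EReal | ∃ k : ℤ, x = ((k : ℝ) : EReal) ∧
            Nontrivial (reducedHomology (nbdCpx G) (ZMod 2) k)} :=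
        ⟨Int.ofNat n, rfl, hns⟩
      have hle : (((Int.ofNat n : ℤ) : ℝ) : EReal) ≤ hdim (nbdCpx G) (ZMod 2) := le_sSup hmem
      have hlt := lt_of_le_of_lt hle hcon
      have hco : ((Int.ofNat n : ℤ) : ℝ) = (n : ℝ) := by norm_num
      rw [hco] at hlt
      rw [show ((G.cliqueNum : ℝ) : EReal) - 2 = (((G.cliqueNum : ℝ) - 2 : ℝ) : EReal) from by
        rw [EReal.coe_sub]; congr 1] at hlt
      rw [EReal.coe_lt_coe_iff] at hlt
      have h2 : (n : ℝ) + 2 < (G.cliqueNum : ℝ) := by linarith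
      have h3 : n + 2 < G.cliqueNum := by exact_mod_cast h2
      omega
    exact NbdH.main_contradiction hcl hm hS hfill
end

section
/- Let G be a chordal graph with at least one edge. Then there exists a non-isolated vertex w of G such that the neighborhood complex N(Ḡ) collapses to the subcomplex N(complement of G − w) (regarded as a complex on underlying set V(G) with w a ghost vertex) and α(G) = α(G − w), where G − w is the induced subgraph of G on V(G) − {w}. -/
open SimpleGraph

/-- A facet of a simplicial complex is a maximal face. -/
def Cplx.IsFacet {V : Type} (K : Cplx V) (σ : Finset V) : Prop :=
  K.faces σ ∧ ∀ ⦃τ : Finset V⦄, K.faces τ → σ ⊆ τ → σ = τ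

/-- A free face: a nonempty face that is not a facet and is contained in exactly
one facet. -/
def Cplx.IsFreeFace {V : Type} (K : Cplx V) (σ : Finset V) : Prop :=
  σ.Nonempty ∧ K.faces σ ∧ ¬ K.IsFacet σ ∧ ∃! τ : Finset V, K.IsFacet τ ∧ σ ⊆ τ

/-- An elementary collapse: remove all faces containing some free face. -/
def CollapseStep {V : Type} (K L : Cplx V) : Prop :=
  ∃ σ : Finset V, K.IsFreeFace σ ∧ ∀ τ : Finset V, L.faces τ ↔ (K.faces τ ∧ ¬ σ ⊆ τ)

/-- `K` collapses to `L` if `L` is obtained from `K` by a finite sequence of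
elementary collapses. -/
def Collapses {V : Type} (K L : Cplx V) : Prop := Relation.ReflTransGen CollapseStep K L

/-- A graph is chordal if it contains no induced cycle of length at least 4. -/
def IsChordal {V : Type} (G : SimpleGraph V) : Prop :=
  ∀ n : ℕ, 4 ≤ n → IsEmpty (cycleGraph n ↪g G)

/-- The independence number of a graph: the largest size of an independent set. -/
noncomputable def indNum {V : Type} [Fintype V] (G : SimpleGraph V) : ℕ :=
  sSup {k : ℕ | ∃ s : Finset V, (∀ u ∈ s, ∀ v ∈ s, ¬ G.Adj u v) ∧ s.card = k}

/-- The neighborhood complex of the complement of `G - w`, regarded as a simplicial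
complex on the underlying set `V(G)` (so `w` is a ghost vertex). -/
def nbdCpxDel {V : Type} (G : SimpleGraph V) (w : V) : Cplx V where
  faces σ := (w ∉ σ) ∧ ∃ v : V, v ≠ w ∧ ∀ u ∈ σ, u ≠ v ∧ ¬ G.Adj u v
  down_closed := by
    rintro σ τ hst ⟨hw, v, hv, h⟩
    exact ⟨fun hc => hw (hst hc), v, hv, fun u hu => h u (hst hu)⟩

lemma Cplx.ext' {V : Type} {K L : Cplx V} (h : ∀ σ, K.faces σ ↔ L.faces σ) : K = L := by
  cases K with | mk f hf => cases L with | mk g hg =>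
  have : f = g := funext fun σ => propext (h σ)
  subst this
  rfl

lemma collapse_empty {V : Type} (w : V) (K L : Cplx V)
    (hL : ∀ σ, L.faces σ ↔ (K.faces σ ∧ w ∉ σ))
    (hempty : ∀ σ : Finset V, K.faces σ → w ∉ σ) : Collapses K L := by
  have : K = L := by
    apply Cplx.ext'
    intro σ
    rw [hL σ]
    exact ⟨fun hf => ⟨hf, hempty σ hf⟩, fun h => h.1⟩
  rw [this]
  exact Relation.ReflTransGen.refl

lemma collapse_aux {V : Type} [Fintype V] [DecidableEq V] (w v : V) (hvw : v ≠ w) :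
    ∀ n : ℕ, ∀ K L : Cplx V,
    (∀ σ, K.faces σ → w ∈ σ → K.faces (σ ∪ {v})) →
    (∀ σ, L.faces σ ↔ (K.faces σ ∧ w ∉ σ)) →
    {σ : Finset V | K.faces σ ∧ w ∈ σ}.ncard ≤ n →
    Collapses K L := by
  intro n
  induction n with
  | zero =>
    intro K L _ hL hcard
    refine collapse_empty w K L hL (fun σ hf hw => ?_)
    have hfin : {σ : Finset V | K.faces σ ∧ w ∈ σ}.Finite := Set.toFinite _
    have h0 : {σ : Finset V | K.faces σ ∧ w ∈ σ}.ncard = 0 := by omega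
    rw [Set.ncard_eq_zero hfin] at h0
    have : σ ∈ {σ : Finset V | K.faces σ ∧ w ∈ σ} := ⟨hf, hw⟩
    rw [h0] at this; exact this
  | succ n ih =>
    intro K L hext hL hcard
    set S : Set (Finset V) := {σ : Finset V | K.faces σ ∧ w ∈ σ} with hS
    by_cases hne : S.Nonempty
    swap
    · refine collapse_empty w K L hL (fun σ hf hw => hne ⟨σ, hf, hw⟩)
    obtain ⟨τ, hτS, hτmax⟩ := Set.Finite.exists_maximalFor
        (fun σ : Finset V => σ.card) S (Set.toFinite _) hne
    obtain ⟨hτf, hwτ⟩ := hτS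
    -- any face containing τ equals τ
    have htop : ∀ ρ : Finset V, K.faces ρ → τ ⊆ ρ → ρ = τ := by
      intro ρ hρ hsub
      have hρS : ρ ∈ S := ⟨hρ, hsub hwτ⟩
      have hcardeq := hτmax hρS (Finset.card_le_card hsub)
      exact (Finset.eq_of_subset_of_card_le hsub hcardeq).symm
    have hvτ : v ∈ τ := by
      have h1 : K.faces (τ ∪ {v}) := hext τ hτf hwτ
      have h2 : τ ∪ {v} = τ := htop _ h1 Finset.subset_union_left
      have : v ∈ τ ∪ {v} := Finset.mem_union_right _ (Finset.mem_singleton_self v)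
      rwa [h2] at this
    set σ0 : Finset V := τ.erase v with hσ0
    have hσ0sub : σ0 ⊆ τ := Finset.erase_subset v τ
    have hσ0f : K.faces σ0 := K.down_closed hσ0sub hτf
    have hwσ0 : w ∈ σ0 := Finset.mem_erase.mpr ⟨fun h => hvw h.symm, hwτ⟩
    have hvσ0 : v ∉ σ0 := Finset.notMem_erase v τ
    have hτeq : σ0 ∪ {v} = τ := by
      ext x; simp only [Finset.mem_union, Finset.mem_singleton, Finset.mem_erase]; by_cases hx : x = v <;> simp [hσ0, hx, hvτ]
    -- faces containing σ0 are exactly σ0 and τ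
    have hkey : ∀ ρ : Finset V, K.faces ρ → σ0 ⊆ ρ → ρ = σ0 ∨ ρ = τ := by
      intro ρ hρ hsub
      have h1 : K.faces (ρ ∪ {v}) := hext ρ hρ (hsub hwσ0)
      have h2 : τ ⊆ ρ ∪ {v} := by
        rw [← hτeq]; exact Finset.union_subset_union_left hsub
      have h3 : ρ ∪ {v} = τ := htop _ h1 h2
      by_cases hv : v ∈ ρ
      · right
        refine le_antisymm ?_ ?_
        · rw [← h3]; exact Finset.subset_union_left
        · rw [← hτeq]; exact Finset.union_subset hsub (Finset.singleton_subset_iff.mpr hv)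
      · left
        refine le_antisymm ?_ hsub
        intro x hx
        have hxτ : x ∈ τ := by rw [← h3]; exact Finset.mem_union_left _ hx
        exact Finset.mem_erase.mpr ⟨fun h => hv (h ▸ hx), hxτ⟩
    have hτfacet : K.IsFacet τ := ⟨hτf, fun ρ hρ hsub => (htop ρ hρ hsub).symm⟩
    have hfree : K.IsFreeFace σ0 := by
      refine ⟨⟨w, hwσ0⟩, hσ0f, ?_, ⟨τ, ⟨hτfacet, hσ0sub⟩, ?_⟩⟩
      · rintro ⟨_, hmax⟩
        have := hmax hτf hσ0sub
        exact hvσ0 (this ▸ hvτ)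
      · rintro ρ ⟨hρfacet, hsub⟩
        rcases hkey ρ hρfacet.1 hsub with h | h
        · exfalso
          subst h
          have := hρfacet.2 hτf hσ0sub
          exact hvσ0 (this ▸ hvτ)
        · exact h
    -- the new complex
    set K' : Cplx V := ⟨fun ρ => K.faces ρ ∧ ¬ σ0 ⊆ ρ, by
      rintro ρ₁ ρ₂ hsub ⟨hf, hns⟩
      exact ⟨K.down_closed hsub hf, fun hc => hns (hc.trans hsub)⟩⟩ with hK'
    have hstep : CollapseStep K K' := ⟨σ0, hfree, fun ρ => Iff.rfl⟩
    have hext' : ∀ σ, K'.faces σ → w ∈ σ → K'.faces (σ ∪ {v}) := by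
      rintro ρ ⟨hf, hns⟩ hw
      refine ⟨hext ρ hf hw, fun hc => hns ?_⟩
      intro x hx
      have := hc hx
      rcases Finset.mem_union.mp this with h | h
      · exact h
      · exact absurd (Finset.mem_singleton.mp h) (fun he => hvσ0 (he ▸ hx))
    have hL' : ∀ σ, L.faces σ ↔ (K'.faces σ ∧ w ∉ σ) := by
      intro ρ
      rw [hL ρ]
      constructor
      · rintro ⟨hf, hw⟩
        exact ⟨⟨hf, fun hc => hw (hc hwσ0)⟩, hw⟩
      · rintro ⟨⟨hf, _⟩, hw⟩
        exact ⟨hf, hw⟩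
    have hmono : {σ : Finset V | K'.faces σ ∧ w ∈ σ} ⊂ S := by
      constructor
      · rintro ρ ⟨⟨hf, _⟩, hw⟩; exact ⟨hf, hw⟩
      · intro hcon
        have hσ0S : σ0 ∈ S := ⟨hσ0f, hwσ0⟩
        have := hcon hσ0S
        exact this.1.2 (le_refl σ0)
    have hcard' : {σ : Finset V | K'.faces σ ∧ w ∈ σ}.ncard ≤ n := by
      have := Set.ncard_lt_ncard hmono (Set.toFinite _)
      omega
    exact Relation.ReflTransGen.head hstep (ih K' L hext' hL' hcard')



lemma getElem_idx_congr {α : Type} (l : List α) {i j : ℕ} (h : i = j) (hj : j < l.length) :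
    l[i]'(h ▸ hj) = l[j] := by subst h; rfl

def RouteIn {V : Type} (G : SimpleGraph V) (T : Set V) (x y : V) (l : List V) : Prop :=
  l.Chain' G.Adj ∧ l.head? = some x ∧ l.getLast? = some y ∧ ∀ z ∈ l, z = x ∨ z = y ∨ z ∈ T

lemma exists_min_route {V : Type} (G : SimpleGraph V) (T : Set V) (x y : V)
    (hxy : x ≠ y) (hnadj : ¬ G.Adj x y) (h : ∃ l, RouteIn G T x y l) :
    ∃ l : List V, RouteIn G T x y l ∧ 3 ≤ l.length ∧ l.Nodup ∧
      ∀ i j (hi : i < l.length) (hj : j < l.length),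
        G.Adj l[i] l[j] ↔ (j = i + 1 ∨ i = j + 1) := by
  have hN : {n | ∃ l, RouteIn G T x y l ∧ l.length = n}.Nonempty := by
    obtain ⟨l, hl⟩ := h
    exact ⟨l.length, l, hl, rfl⟩
  obtain ⟨l, hl, hlen⟩ := Nat.sInf_mem hN
  have hmin : ∀ l', RouteIn G T x y l' → l.length ≤ l'.length := by
    intro l' h'
    rw [hlen]
    exact Nat.sInf_le ⟨l', h', rfl⟩
  clear hlen
  obtain ⟨hchain, hhead, hlast, hmem⟩ := hl
  have hn0 : 0 < l.length := by
    rcases l with _ | ⟨a, t⟩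
    · simp at hhead
    · simp
  have h0 : l[0] = x := by
    have h1 := List.head?_eq_getElem? (l := l)
    rw [hhead, List.getElem?_eq_getElem hn0] at h1
    exact (Option.some_inj.mp h1).symm
  have hl1 : l[l.length - 1]'(by omega) = y := by
    have h1 := List.getLast?_eq_getElem? (l := l)
    rw [hlast, List.getElem?_eq_getElem (by omega : l.length - 1 < l.length)] at h1
    exact (Option.some_inj.mp h1).symm
  have htake_len : ∀ i, i < l.length → (l.take (i+1)).length = i + 1 := by
    intro i hi; rw [List.length_take]; omega
  have htake_last : ∀ i (hi : i < l.length), (l.take (i+1)).getLast? = some l[i] := by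
    intro i hi
    rw [List.take_succ, List.getElem?_eq_getElem hi]
    exact List.getLast?_concat
  have htake_head : ∀ i (hi : i < l.length), (l.take (i+1)).head? = some x := by
    intro i hi
    rw [List.head?_eq_getElem?]
    have h2 : 0 < (l.take (i+1)).length := by rw [htake_len i hi]; omega
    rw [List.getElem?_eq_getElem h2, List.getElem_take, h0]
  have hdrop_head : ∀ j (hj : j < l.length), (l.drop j).head? = some l[j] := by
    intro j hj; rw [List.head?_drop, List.getElem?_eq_getElem hj]
  have hchainget : ∀ i (hi : i + 1 < l.length), G.Adj (l[i]'(by omega)) l[i+1] := by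
    intro i hi
    have := List.isChain_iff_getElem.mp hchain i (by omega)
    simpa using this
  -- no chords
  have key : ∀ i j (hij : i < j) (hj : j < l.length),
      G.Adj (l[i]'(by omega)) l[j] → j = i + 1 := by
    intro i j hij hj hadj
    by_contra hcon
    have hr' : RouteIn G T x y (l.take (i+1) ++ l.drop j) := by
      refine ⟨?_, ?_, ?_, ?_⟩
      · refine List.IsChain.append (hchain.take _) (hchain.drop _) ?_
        intro p hp q hq
        rw [htake_last i (by omega)] at hp
        rw [hdrop_head j hj] at hq
        rw [Option.mem_def, Option.some_inj] at hp hq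
        rw [← hp, ← hq]
        exact hadj
      · rw [List.head?_append, htake_head i (by omega)]
        rfl
      · rw [List.getLast?_append, List.getLast?_drop, if_neg (by omega), hlast]
        rfl
      · intro z hz
        rcases List.mem_append.mp hz with h' | h'
        · exact hmem z (List.take_subset _ _ h')
        · exact hmem z (List.drop_subset _ _ h')
    have := hmin _ hr'
    rw [List.length_append, htake_len i (by omega), List.length_drop] at this
    omega
  -- nodup
  have key2 : ∀ i j (hij : i < j) (hj : j < l.length), (l[i]'(by omega)) ≠ l[j] := by
    intro i j hij hj heq
    by_cases hj1 : j + 1 < l.length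
    · have hr' : RouteIn G T x y (l.take (i+1) ++ l.drop (j+1)) := by
        refine ⟨?_, ?_, ?_, ?_⟩
        · refine List.IsChain.append (hchain.take _) (hchain.drop _) ?_
          intro p hp q hq
          rw [htake_last i (by omega)] at hp
          rw [hdrop_head (j+1) hj1] at hq
          rw [Option.mem_def, Option.some_inj] at hp hq
          rw [← hp, ← hq, heq]
          exact hchainget j hj1
        · rw [List.head?_append, htake_head i (by omega)]
          rfl
        · rw [List.getLast?_append, List.getLast?_drop, if_neg (by omega), hlast]
          rfl
        · intro z hz
          rcases List.mem_append.mp hz with h' | h'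
          · exact hmem z (List.take_subset _ _ h')
          · exact hmem z (List.drop_subset _ _ h')
      have := hmin _ hr'
      rw [List.length_append, htake_len i (by omega), List.length_drop] at this
      omega
    · have hr' : RouteIn G T x y (l.take (i+1)) := by
        refine ⟨hchain.take _, htake_head i (by omega), ?_, ?_⟩
        · rw [htake_last i (by omega), heq,
            getElem_idx_congr l (by omega : j = l.length - 1) (by omega), hl1]
        · intro z hz
          exact hmem z (List.take_subset _ _ hz)
      have := hmin _ hr'
      rw [htake_len i (by omega)] at this
      omega
  have hnodup : l.Nodup := by
    rw [List.Nodup, List.pairwise_iff_getElem]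
    intro i j hi hj hij
    exact key2 i j hij hj
  have hn3 : 3 ≤ l.length := by
    rcases l with _ | ⟨a, t⟩
    · simp at hhead
    rcases t with _ | ⟨b, t⟩
    · simp at hhead hlast
      exact absurd (hhead ▸ hlast ▸ rfl : x = y) hxy
    rcases t with _ | ⟨c, t⟩
    · exfalso
      simp at hhead hlast
      apply hnadj
      rw [← hhead, ← hlast]
      exact (List.isChain_cons_cons.mp hchain).1
    · simp
  refine ⟨l, ⟨hchain, hhead, hlast, hmem⟩, hn3, hnodup, ?_⟩
  intro i j hi hj
  constructor
  · intro hadj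
    rcases lt_trichotomy i j with hij | rfl | hij
    · exact Or.inl (key i j hij hj hadj)
    · exact absurd rfl hadj.ne
    · exact Or.inr (key j i hij hi hadj.symm)
  · rintro (h' | h')
    · subst h'
      exact hchainget i hj
    · subst h'
      exact (hchainget j hi).symm

lemma fin_cyc {n : ℕ} (hn : 4 ≤ n) (i j : Fin n) :
    ((i - j).val = 1 ∨ (j - i).val = 1) ↔
      (j.val = i.val + 1 ∨ i.val = j.val + 1 ∨ (i.val = 0 ∧ j.val = n - 1) ∨
        (j.val = 0 ∧ i.val = n - 1)) := by
  obtain ⟨a, ha⟩ := i; obtain ⟨b, hb⟩ := j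
  rw [Fin.sub_def, Fin.sub_def]
  simp only [Fin.val_mk]
  have e1 : (n - b + a) % n = if n - b + a < n then n - b + a else n - b + a - n := by
    split
    · exact Nat.mod_eq_of_lt ‹_›
    · rw [Nat.mod_eq_sub_mod (by omega), Nat.mod_eq_of_lt (by omega)]
  have e2 : (n - a + b) % n = if n - a + b < n then n - a + b else n - a + b - n := by
    split
    · exact Nat.mod_eq_of_lt ‹_›
    · rw [Nat.mod_eq_sub_mod (by omega), Nat.mod_eq_of_lt (by omega)]
  rw [e1, e2]
  split <;> split <;> omega


lemma getElem_congr2 {α : Type} {l m : List α} (h : l = m) {i j : ℕ} (hij : i = j)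
    (hi : i < l.length) (hj : j < m.length) : l[i]'hi = m[j]'hj := by
  subst h; subst hij; rfl

lemma route_ends {V : Type} {G : SimpleGraph V} {T : Set V} {x y : V} {l : List V}
    (h : RouteIn G T x y l) (h3 : 3 ≤ l.length) :
    l[0]'(by omega) = x ∧ l[l.length - 1]'(by omega) = y := by
  obtain ⟨_, hhead, hlast, _⟩ := h
  constructor
  · have h1 := List.head?_eq_getElem? (l := l)
    rw [hhead, List.getElem?_eq_getElem (by omega : 0 < l.length)] at h1
    exact (Option.some_inj.mp h1).symm
  · have h1 := List.getLast?_eq_getElem? (l := l)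
    rw [hlast, List.getElem?_eq_getElem (by omega : l.length - 1 < l.length)] at h1
    exact (Option.some_inj.mp h1).symm

lemma no_two_routes {V : Type} (G : SimpleGraph V)
    (hch : ∀ n : ℕ, 4 ≤ n → IsEmpty (cycleGraph n ↪g G))
    (A B : Set V) (x y : V)
    (hxy : x ≠ y) (hnadj : ¬ G.Adj x y)
    (hxB : x ∉ B) (hyB : y ∉ B)
    (hAB : ∀ a ∈ A, a ∉ B)
    (hnoedge : ∀ a ∈ A, ∀ b ∈ B, ¬ G.Adj a b)
    (hA : ∃ l, RouteIn G A x y l) (hB : ∃ l, RouteIn G B y x l) : False := by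
  obtain ⟨LA, rA, h3A, ndA, iffA⟩ := exists_min_route G A x y hxy hnadj hA
  obtain ⟨LB, rB, h3B, ndB, iffB⟩ :=
    exists_min_route G B y x (Ne.symm hxy) (fun h => hnadj h.symm) hB
  set na := LA.length with hna
  set nb := LB.length with hnb
  obtain ⟨hA0, hAl⟩ := route_ends rA h3A
  obtain ⟨hB0, hBl⟩ := route_ends rB h3B
  set M : List V := (LB.drop 1).dropLast with hM
  have hMlen : M.length = nb - 2 := by
    rw [hM, List.length_dropLast, List.length_drop]
    omega
  set C : List V := LA ++ M with hC
  set n := C.length with hn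
  have hnlen : n = na + nb - 2 := by
    rw [hn, hC, List.length_append, hMlen]
    omega
  have hn4 : 4 ≤ n := by omega
  -- getElem facts
  have hCa : ∀ i (h : i < na), C[i]'(by omega) = LA[i] := by
    intro i h
    have e1 : C[i]'(by omega) = (LA ++ M)[i]'(by rw [← hC]; omega) :=
      getElem_congr2 hC rfl _ _
    rw [e1, List.getElem_append, dif_pos (show i < LA.length by omega)]
  have hCb : ∀ t (h : t < nb - 2), C[na + t]'(by omega) = LB[t+1]'(by omega) := by
    intro t h
    have e1 : C[na + t]'(by omega) = (LA ++ M)[na + t]'(by rw [← hC]; omega) :=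
      getElem_congr2 hC rfl _ _
    rw [e1, List.getElem_append, dif_neg (show ¬ na + t < LA.length by omega)]
    have e2 : (LA ++ M)[na + t]'(by rw [← hC]; omega) = (LA ++ M)[na + t]'(by rw [← hC]; omega) := rfl
    have e3 : M[na + t - LA.length]'(by rw [hMlen]; omega) =
        ((LB.drop 1).dropLast)[t]'(by rw [← hM, hMlen]; omega) :=
      getElem_congr2 hM (by omega) _ _
    rw [e3, List.getElem_dropLast, List.getElem_drop]
    exact getElem_idx_congr LB (by omega) (by omega)
  have hCB : ∀ p (hp : p < nb - 1), C[na - 1 + p]'(by omega) = LB[p]'(by omega) := by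
    intro p hp
    rcases Nat.eq_zero_or_pos p with rfl | hppos
    · have e1 : C[na - 1 + 0]'(by omega) = C[na-1]'(by omega) :=
        getElem_idx_congr C (by omega) (by omega)
      rw [e1, hCa (na-1) (by omega), hAl, ← hB0]
    · have e1 : C[na - 1 + p]'(by omega) = C[na + (p-1)]'(by omega) :=
        getElem_idx_congr C (by omega) (by omega)
      rw [e1, hCb (p-1) (by omega)]
      exact getElem_idx_congr LB (by omega) (by omega)
  -- membership facts
  have hAmem : ∀ i (h : i < na), 1 ≤ i → i ≤ na - 2 → LA[i] ∈ A := by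
    intro i h h1 h2
    rcases rA.2.2.2 LA[i] (List.mem_iff_getElem.mpr ⟨i, h, rfl⟩) with h' | h' | h'
    · exfalso
      rw [← hA0] at h'
      have := ndA.getElem_inj_iff.mp h'
      omega
    · exfalso
      rw [← hAl] at h'
      have := ndA.getElem_inj_iff.mp h'
      omega
    · exact h'
  have hBmem : ∀ q (h : q < nb), 1 ≤ q → q ≤ nb - 2 → LB[q] ∈ B := by
    intro q h h1 h2
    rcases rB.2.2.2 LB[q] (List.mem_iff_getElem.mpr ⟨q, h, rfl⟩) with h' | h' | h'
    · exfalso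
      rw [← hB0] at h'
      have := ndB.getElem_inj_iff.mp h'
      omega
    · exfalso
      rw [← hBl] at h'
      have := ndB.getElem_inj_iff.mp h'
      omega
    · exact h'
  -- main adjacency characterization, for i ≤ j
  have claim : ∀ i j (hi : i < n) (hj : j < n), i ≤ j →
      (G.Adj (C[i]'hi) (C[j]'hj) ↔ (j = i + 1 ∨ i = j + 1 ∨ (i = 0 ∧ j = n - 1) ∨
        (j = 0 ∧ i = n - 1))) := by
    intro i j hi hj hij
    by_cases hja : j ≤ na - 1
    · rw [hCa i (by omega), hCa j (by omega), iffA i j (by omega) (by omega)]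
      omega
    · by_cases hib : na - 1 ≤ i
      · have e1 : C[i]'hi = C[na - 1 + (i - (na-1))]'(by omega) :=
          getElem_idx_congr C (by omega) (by omega)
        have e2 : C[j]'hj = C[na - 1 + (j - (na-1))]'(by omega) :=
          getElem_idx_congr C (by omega) (by omega)
        rw [e1, e2, hCB (i - (na-1)) (by omega), hCB (j - (na-1)) (by omega),
          iffB (i - (na-1)) (j - (na-1)) (by omega) (by omega)]
        omega
      · -- i ≤ na - 2, j ≥ na
        by_cases hi1 : 1 ≤ i
        · have h1 : C[i]'hi = LA[i]'(by omega) := hCa i (by omega)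
          have h2 : C[j]'hj = LB[j - na + 1]'(by omega) := by
            have e1 : C[j]'hj = C[na + (j - na)]'(by omega) :=
              getElem_idx_congr C (by omega) (by omega)
            rw [e1, hCb (j - na) (by omega)]
          have hnoadj : ¬ G.Adj (C[i]'hi) (C[j]'hj) := by
            rw [h1, h2]
            exact hnoedge _ (hAmem i (by omega) hi1 (by omega)) _
              (hBmem (j - na + 1) (by omega) (by omega) (by omega))
          constructor
          · intro hadj; exact absurd hadj hnoadj
          · intro hr; exfalso; omega
        · have hi0 : i = 0 := by omega
          subst hi0
          have h1 : C[0]'hi = LB[nb - 1]'(by omega) := by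
            rw [hCa 0 (by omega), hA0, ← hBl]
          have h2 : C[j]'hj = LB[j - na + 1]'(by omega) := by
            have e1 : C[j]'hj = C[na + (j - na)]'(by omega) :=
              getElem_idx_congr C (by omega) (by omega)
            rw [e1, hCb (j - na) (by omega)]
          rw [h1, h2, iffB (nb - 1) (j - na + 1) (by omega) (by omega)]
          omega
  have adj_iff : ∀ i j (hi : i < n) (hj : j < n),
      (G.Adj (C[i]'hi) (C[j]'hj) ↔ (j = i + 1 ∨ i = j + 1 ∨ (i = 0 ∧ j = n - 1) ∨
        (j = 0 ∧ i = n - 1))) := by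
    intro i j hi hj
    rcases le_total i j with h | h
    · exact claim i j hi hj h
    · rw [G.adj_comm, claim j i hj hi h]
      omega
  -- nodup
  have hMB : ∀ z ∈ M, z ∈ B := by
    intro z hz
    obtain ⟨t, ht, rfl⟩ := List.mem_iff_getElem.mp hz
    rw [hMlen] at ht
    have e1 : M[t]'(by rw [hMlen]; omega) = LB[t+1]'(by omega) := by
      have e0 : M[t]'(by rw [hMlen]; omega) =
          ((LB.drop 1).dropLast)[t]'(by rw [← hM, hMlen]; omega) :=
        getElem_congr2 hM rfl _ _
      rw [e0, List.getElem_dropLast, List.getElem_drop]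
      exact getElem_idx_congr LB (by omega) (by omega)
    rw [e1]
    exact hBmem (t+1) (by omega) (by omega) (by omega)
  have hnd : C.Nodup := by
    rw [hC, List.nodup_append]
    refine ⟨ndA, ndB.sublist ((List.dropLast_sublist _).trans (List.drop_sublist _ _)), ?_⟩
    intro z hzA z' hzM hzz
    subst hzz
    have hzB := hMB z hzM
    rcases rA.2.2.2 z hzA with h' | h' | h'
    · exact hxB (h' ▸ hzB)
    · exact hyB (h' ▸ hzB)
    · exact hAB z h' hzB
  -- build the embedding
  have hemb : Nonempty (cycleGraph n ↪g G) := by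
    refine ⟨⟨⟨fun i : Fin n => C[i.val]'i.isLt, ?_⟩, ?_⟩⟩
    · intro i j hij
      exact Fin.ext (hnd.getElem_inj_iff.mp hij)
    · intro i j
      show G.Adj (C[i.val]'i.isLt) (C[j.val]'j.isLt) ↔ _
      rw [adj_iff i.val j.val i.isLt j.isLt, cycleGraph_adj', fin_cyc hn4 i j]
  exact (hch n hn4).false hemb.some

def WalkIn {V : Type} (G : SimpleGraph V) (T : Set V) (a b : V) : Prop :=
  ∃ p : G.Walk a b, ∀ z ∈ p.support, z ∈ T

namespace WalkIn

variable {V : Type} {G : SimpleGraph V} {T T' : Set V} {a b c : V}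

lemma refl (ha : a ∈ T) : WalkIn G T a a :=
  ⟨Walk.nil, by intro z hz; rw [Walk.support_nil, List.mem_singleton] at hz; rwa [hz]⟩

lemma symm (h : WalkIn G T a b) : WalkIn G T b a := by
  obtain ⟨p, hp⟩ := h
  exact ⟨p.reverse, fun z hz => hp z (by rwa [Walk.support_reverse, List.mem_reverse] at hz)⟩

lemma trans (h1 : WalkIn G T a b) (h2 : WalkIn G T b c) : WalkIn G T a c := by
  obtain ⟨p, hp⟩ := h1; obtain ⟨q, hq⟩ := h2
  refine ⟨p.append q, fun z hz => ?_⟩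
  rw [Walk.support_append, List.mem_append] at hz
  rcases hz with hz | hz
  · exact hp z hz
  · exact hq z (List.mem_of_mem_tail hz)

lemma fst_mem (h : WalkIn G T a b) : a ∈ T := by
  obtain ⟨p, hp⟩ := h
  exact hp a p.start_mem_support

lemma snd_mem (h : WalkIn G T a b) : b ∈ T := by
  obtain ⟨p, hp⟩ := h
  exact hp b p.end_mem_support

lemma snoc (h : WalkIn G T a b) (hadj : G.Adj b c) (hc : c ∈ T) : WalkIn G T a c := by
  refine h.trans ⟨Walk.cons hadj Walk.nil, ?_⟩
  intro z hz
  rw [Walk.support_cons, Walk.support_nil] at hz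
  simp only [List.mem_cons, List.mem_singleton, List.not_mem_nil, or_false] at hz
  rcases hz with rfl | rfl
  · exact h.snd_mem
  · exact hc

lemma mono (hTT : T ⊆ T') (h : WalkIn G T a b) : WalkIn G T' a b := by
  obtain ⟨p, hp⟩ := h
  exact ⟨p, fun z hz => hTT (hp z hz)⟩

lemma of_support [DecidableEq V] (p : G.Walk a b) (hp : ∀ z ∈ p.support, z ∈ T) :
    ∀ z ∈ p.support, WalkIn G T a z := fun z hz =>
  ⟨p.takeUntil z hz, fun u hu => hp u (Walk.support_takeUntil_subset p hz hu)⟩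

end WalkIn

lemma route_of_walk {V : Type} {G : SimpleGraph V} {T : Set V} {x y : V} (p : G.Walk x y)
    (hm : ∀ z ∈ p.support, z = x ∨ z = y ∨ z ∈ T) : RouteIn G T x y p.support := by
  refine ⟨p.isChain_adj_support, ?_, ?_, hm⟩
  · rw [p.support_eq_cons]; rfl
  · rw [← List.head?_reverse, ← Walk.support_reverse, (p.reverse).support_eq_cons]; rfl

lemma route_exists {V : Type} {G : SimpleGraph V} {A : Set V} {x y c1 c2 : V}
    (hadj1 : G.Adj x c1) (hadj2 : G.Adj y c2)
    (hc : ∃ w : G.Walk c1 c2, ∀ z ∈ w.support, z ∈ A) :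
    ∃ l, RouteIn G A x y l := by
  obtain ⟨w, hw⟩ := hc
  refine ⟨_, route_of_walk (Walk.cons hadj1 (w.append (Walk.cons hadj2.symm Walk.nil))) ?_⟩
  intro z hz
  rw [Walk.support_cons, List.mem_cons] at hz
  rcases hz with rfl | hz
  · exact Or.inl rfl
  rw [Walk.support_append, List.mem_append] at hz
  rcases hz with hz | hz
  · exact Or.inr (Or.inr (hw z hz))
  · rw [Walk.support_cons, Walk.support_nil] at hz
    simp only [List.tail_cons, List.mem_singleton] at hz
    exact Or.inr (Or.inl hz)

lemma side_conn {V : Type} [DecidableEq V] {G : SimpleGraph V} {T : Set V} {u c1 c2 : V}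
    (h1 : WalkIn G T u c1) (h2 : WalkIn G T u c2) :
    ∃ w : G.Walk c1 c2, ∀ z ∈ w.support, z ∈ T ∧ WalkIn G T u z := by
  obtain ⟨p1, hp1⟩ := h1; obtain ⟨p2, hp2⟩ := h2
  refine ⟨p1.reverse.append p2, ?_⟩
  intro z hz
  rw [Walk.support_append, List.mem_append] at hz
  rcases hz with hz | hz
  · rw [Walk.support_reverse, List.mem_reverse] at hz
    exact ⟨hp1 z hz, WalkIn.of_support p1 hp1 z hz⟩
  · have hz' := List.mem_of_mem_tail hz
    exact ⟨hp2 z hz', WalkIn.of_support p2 hp2 z hz'⟩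

lemma sep_nbr {V : Type} [DecidableEq V] {G : SimpleGraph V} {T : Set V} {a b s : V}
    (p : G.Walk a b) (hs : s ∈ p.support) (hsa : s ≠ a) (hsup : ∀ z ∈ p.support, z ∈ T) :
    ∃ c, G.Adj s c ∧ WalkIn G (T \ {s}) a c := by
  have hcount : (p.takeUntil s hs).support.count s = 1 := p.count_support_takeUntil_eq_one hs
  obtain ⟨c, hadj, r, hr⟩ := Walk.exists_eq_cons_of_ne hsa (p.takeUntil s hs).reverse
  have hsupr : (p.takeUntil s hs).reverse.support = s :: r.support := by
    rw [hr, Walk.support_cons]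
  have hsnot : s ∉ r.support := by
    have h1 : (p.takeUntil s hs).reverse.support.count s = 1 := by
      rw [Walk.support_reverse, List.count_reverse]; exact hcount
    rw [hsupr, List.count_cons_self] at h1
    exact List.count_eq_zero.mp (by omega)
  refine ⟨c, hadj, r.reverse, ?_⟩
  intro z hz
  rw [Walk.support_reverse, List.mem_reverse] at hz
  have hzq : z ∈ (p.takeUntil s hs).support := by
    have h2 : z ∈ (p.takeUntil s hs).reverse.support := by
      rw [hsupr]; exact List.mem_cons_of_mem _ hz
    rwa [Walk.support_reverse, List.mem_reverse] at h2
  exact ⟨hsup z (Walk.support_takeUntil_subset p hs hzq), fun he => hsnot (he ▸ hz)⟩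

lemma no_walk_pair {V : Type} {G : SimpleGraph V} {a b : V} (hne : a ≠ b)
    (hnadj : ¬ G.Adj a b) {T : Set V} (hT : T ⊆ {a, b}) : ¬ WalkIn G T a b := by
  rintro ⟨p, hp⟩
  obtain ⟨c, hadj, r, hr⟩ := Walk.exists_eq_cons_of_ne hne p
  have hcmem : c ∈ p.support := by
    rw [hr, Walk.support_cons]
    exact List.mem_cons_of_mem _ r.start_mem_support
  rcases Set.mem_insert_iff.mp (hT (hp c hcmem)) with h | h
  · exact hadj.ne h.symm
  · rw [Set.mem_singleton_iff] at h
    exact hnadj (h ▸ hadj)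

theorem dirac_aux {V : Type} [Fintype V] [DecidableEq V] (G : SimpleGraph V)
    (hch : ∀ n : ℕ, 4 ≤ n → IsEmpty (cycleGraph n ↪g G)) :
    ∀ (n : ℕ) (W K : Finset V), W.card = n → K ⊆ W →
    (∀ p ∈ K, ∀ q ∈ K, p ≠ q → G.Adj p q) →
    (∃ a ∈ W, a ∉ K) →
    ∃ x ∈ W, x ∉ K ∧ ∀ p ∈ W, ∀ q ∈ W, G.Adj x p → G.Adj x q → p ≠ q → G.Adj p q := by
  intro n
  induction n using Nat.strong_induction_on with
  | _ n ih =>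
  rintro W K hn hKW hKclq ⟨a', haW', haK'⟩
  classical
  by_cases hcomp : ∀ p ∈ W, ∀ q ∈ W, p ≠ q → G.Adj p q
  · exact ⟨a', haW', haK', fun p hp q hq _ _ hpq => hcomp p hp q hq hpq⟩
  push_neg at hcomp
  obtain ⟨a0, ha0W, b0, hb0W, hab, hnadj⟩ := hcomp
  set P : Finset V → Prop := fun S => S ⊆ W \ {a0, b0} ∧ ¬ WalkIn G (↑(W \ S)) a0 b0
    with hPdef
  have hPne : P (W \ {a0, b0}) := by
    refine ⟨Finset.Subset.refl _, ?_⟩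
    apply no_walk_pair hab hnadj
    intro z hz
    simp only [Finset.coe_sdiff, Set.mem_diff, Finset.mem_coe, Finset.mem_sdiff,
      Finset.mem_insert, Finset.mem_singleton, not_and, not_not] at hz
    obtain ⟨hzW, hz2⟩ := hz
    rcases hz2 hzW with h | h
    · simp [h]
    · simp [h]
  obtain ⟨S, hSmem, hSmin⟩ := Finset.exists_min_image
    (Finset.univ.filter P) Finset.card
    ⟨W \ {a0, b0}, Finset.mem_filter.mpr ⟨Finset.mem_univ _, hPne⟩⟩
  have hSP : P S := (Finset.mem_filter.mp hSmem).2
  have hSmin' : ∀ S', P S' → S.card ≤ S'.card := fun S' h =>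
    hSmin S' (Finset.mem_filter.mpr ⟨Finset.mem_univ _, h⟩)
  obtain ⟨hSsub, hSsep⟩ := hSP
  set T : Set V := ↑(W \ S) with hTdef
  have hmemT : ∀ z, z ∈ T ↔ (z ∈ W ∧ z ∉ S) := by
    intro z
    rw [hTdef, Finset.mem_coe, Finset.mem_sdiff]
  have hSa0b0 : a0 ∉ S ∧ b0 ∉ S := by
    constructor
    · intro hc
      have := hSsub hc
      rw [Finset.mem_sdiff] at this
      exact this.2 (Finset.mem_insert_self _ _)
    · intro hc
      have := hSsub hc
      rw [Finset.mem_sdiff] at this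
      exact this.2 (Finset.mem_insert.mpr (Or.inr (Finset.mem_singleton_self _)))
  have hSW : S ⊆ W := hSsub.trans (Finset.sdiff_subset)
  have ha0T : a0 ∈ T := (hmemT a0).mpr ⟨ha0W, hSa0b0.1⟩
  have hb0T : b0 ∈ T := (hmemT b0).mpr ⟨hb0W, hSa0b0.2⟩
  set A : Set V := {z | z ∈ T ∧ WalkIn G T a0 z} with hAdef
  set B : Set V := {z | z ∈ T ∧ WalkIn G T b0 z} with hBdef
  have ha0A : a0 ∈ A := ⟨ha0T, WalkIn.refl ha0T⟩
  have hb0B : b0 ∈ B := ⟨hb0T, WalkIn.refl hb0T⟩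
  have hABdisj : ∀ z, z ∈ A → z ∈ B → False := by
    rintro z ⟨_, h1⟩ ⟨_, h2⟩
    exact hSsep (h1.trans h2.symm)
  have hnoedgeAB : ∀ z ∈ A, ∀ z' ∈ B, ¬ G.Adj z z' := by
    rintro z ⟨hzT, hzw⟩ z' ⟨hzT', hzw'⟩ hadj
    exact hSsep ((hzw.snoc hadj hzT').trans hzw'.symm)
  -- neighbors of separator vertices on each side
  have hSnbrA : ∀ s ∈ S, ∃ c, c ∈ A ∧ G.Adj s c := by
    intro s hs
    have hPs : ¬ P (S.erase s) := by
      intro hP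
      have h1 := hSmin' _ hP
      have h2 : (S.erase s).card < S.card := Finset.card_erase_lt_of_mem hs
      omega
    have hsub' : S.erase s ⊆ W \ {a0, b0} := (Finset.erase_subset s S).trans hSsub
    have hwalk : WalkIn G (↑(W \ S.erase s)) a0 b0 := by
      by_contra hc; exact hPs ⟨hsub', hc⟩
    obtain ⟨p, hp⟩ := hwalk
    have hsmem : s ∈ p.support := by
      by_contra hns
      apply hSsep
      refine ⟨p, fun z hz => ?_⟩
      have h1 := hp z hz
      rw [Finset.mem_coe, Finset.mem_sdiff] at h1
      rw [hmemT]
      refine ⟨h1.1, fun hzS => ?_⟩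
      have : z ∈ S.erase s := Finset.mem_erase.mpr ⟨fun he => hns (he ▸ hz), hzS⟩
      exact h1.2 this
    have hsa : s ≠ a0 := fun h => hSa0b0.1 (h ▸ hs)
    obtain ⟨c, hadj, hwc⟩ := sep_nbr p hsmem hsa hp
    have hsub2 : ((↑(W \ S.erase s) : Set V) \ {s}) ⊆ T := by
      rintro z ⟨hz1, hz2⟩
      rw [Finset.mem_coe, Finset.mem_sdiff] at hz1
      rw [Set.mem_singleton_iff] at hz2
      rw [hmemT]
      refine ⟨hz1.1, fun hzS => hz1.2 (Finset.mem_erase.mpr ⟨hz2, hzS⟩)⟩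
    have hwc' : WalkIn G T a0 c := hwc.mono hsub2
    exact ⟨c, ⟨hwc'.snd_mem, hwc'⟩, hadj⟩
  have hSnbrB : ∀ s ∈ S, ∃ c, c ∈ B ∧ G.Adj s c := by
    intro s hs
    have hPs : ¬ P (S.erase s) := by
      intro hP
      have h1 := hSmin' _ hP
      have h2 : (S.erase s).card < S.card := Finset.card_erase_lt_of_mem hs
      omega
    have hsub' : S.erase s ⊆ W \ {a0, b0} := (Finset.erase_subset s S).trans hSsub
    have hwalk : WalkIn G (↑(W \ S.erase s)) a0 b0 := by
      by_contra hc; exact hPs ⟨hsub', hc⟩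
    obtain ⟨p, hp⟩ := hwalk
    have hp' : ∀ z ∈ p.reverse.support, z ∈ (↑(W \ S.erase s) : Set V) := by
      intro z hz
      rw [Walk.support_reverse, List.mem_reverse] at hz
      exact hp z hz
    have hsmem : s ∈ p.reverse.support := by
      rw [Walk.support_reverse, List.mem_reverse]
      by_contra hns
      apply hSsep
      refine ⟨p, fun z hz => ?_⟩
      have h1 := hp z hz
      rw [Finset.mem_coe, Finset.mem_sdiff] at h1
      rw [hmemT]
      refine ⟨h1.1, fun hzS => ?_⟩
      have : z ∈ S.erase s := Finset.mem_erase.mpr ⟨fun he => hns (he ▸ hz), hzS⟩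
      exact h1.2 this
    have hsb : s ≠ b0 := fun h => hSa0b0.2 (h ▸ hs)
    obtain ⟨c, hadj, hwc⟩ := sep_nbr p.reverse hsmem hsb hp'
    have hsub2 : ((↑(W \ S.erase s) : Set V) \ {s}) ⊆ T := by
      rintro z ⟨hz1, hz2⟩
      rw [Finset.mem_coe, Finset.mem_sdiff] at hz1
      rw [Set.mem_singleton_iff] at hz2
      rw [hmemT]
      refine ⟨hz1.1, fun hzS => hz1.2 (Finset.mem_erase.mpr ⟨hz2, hzS⟩)⟩
    have hwc' : WalkIn G T b0 c := hwc.mono hsub2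
    exact ⟨c, ⟨hwc'.snd_mem, hwc'⟩, hadj⟩
  -- the separator is a clique
  have hSclq : ∀ p ∈ S, ∀ q ∈ S, p ≠ q → G.Adj p q := by
    intro x hx y hy hxy
    by_contra hnadjxy
    have hxB : x ∉ B := fun hc => (((hmemT x).mp hc.1).2) hx
    have hyB : y ∉ B := fun hc => (((hmemT y).mp hc.1).2) hy
    refine no_two_routes G hch A B x y hxy hnadjxy hxB hyB
      (fun z hz hz' => hABdisj z hz hz') hnoedgeAB ?_ ?_
    · obtain ⟨c1, hc1A, hadj1⟩ := hSnbrA x hx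
      obtain ⟨c2, hc2A, hadj2⟩ := hSnbrA y hy
      obtain ⟨w, hw⟩ := side_conn hc1A.2 hc2A.2
      exact route_exists hadj1 hadj2 ⟨w, fun z hz => ⟨(hw z hz).1, (hw z hz).2⟩⟩
    · obtain ⟨c1, hc1B, hadj1⟩ := hSnbrB y hy
      obtain ⟨c2, hc2B, hadj2⟩ := hSnbrB x hx
      obtain ⟨w, hw⟩ := side_conn hc1B.2 hc2B.2
      exact route_exists hadj1 hadj2 ⟨w, fun z hz => ⟨(hw z hz).1, (hw z hz).2⟩⟩
  -- recursion into one side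
  have step : ∀ (u0 : V) (A' : Set V), u0 ∈ A' →
      A' = {z | z ∈ T ∧ WalkIn G T u0 z} →
      (∀ z, z ∈ A' → z ∈ W ∧ z ∉ S) →
      (∃ b', b' ∈ W ∧ b' ∉ S ∧ b' ∉ A') →
      (∀ u ∈ K, u ∉ A') →
      ∃ x ∈ W, x ∉ K ∧ ∀ p ∈ W, ∀ q ∈ W, G.Adj x p → G.Adj x q → p ≠ q → G.Adj p q := by
    rintro u0 A' hu0A hA'def hA'sub ⟨b', hb'W, hb'S, hb'A⟩ hKA
    have hclosed : ∀ z ∈ A', ∀ c, G.Adj z c → c ∈ W → c ∉ S → c ∈ A' := by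
      intro z hz c hadj hcW hcS
      rw [hA'def] at hz ⊢
      exact ⟨(hmemT c).mpr ⟨hcW, hcS⟩, hz.2.snoc hadj ((hmemT c).mpr ⟨hcW, hcS⟩)⟩
    set W' : Finset V := S ∪ W.filter (fun z => z ∈ A') with hW'def
    have hW'sub : W' ⊆ W := by
      intro z hz
      rcases Finset.mem_union.mp hz with h | h
      · exact hSW h
      · exact (Finset.mem_filter.mp h).1
    have hb'W' : b' ∉ W' := by
      intro hc
      rcases Finset.mem_union.mp hc with h | h
      · exact hb'S h
      · exact hb'A (Finset.mem_filter.mp h).2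
    have hcard : W'.card < n := by
      rw [← hn]
      exact Finset.card_lt_card ⟨hW'sub, fun hc => hb'W' (hc hb'W)⟩
    have hu0W : u0 ∈ W := (hA'sub u0 hu0A).1
    have hu0S : u0 ∉ S := (hA'sub u0 hu0A).2
    have hu0W' : u0 ∈ W' := Finset.mem_union_right _
      (Finset.mem_filter.mpr ⟨hu0W, hu0A⟩)
    obtain ⟨x, hxW', hxS, hsimp'⟩ := ih W'.card hcard W' S rfl
      Finset.subset_union_left hSclq ⟨u0, hu0W', hu0S⟩
    have hxA : x ∈ A' := by
      rcases Finset.mem_union.mp hxW' with h | h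
      · exact absurd h hxS
      · exact (Finset.mem_filter.mp h).2
    have hxK : x ∉ K := fun hk => hKA x hk hxA
    refine ⟨x, hW'sub hxW', hxK, ?_⟩
    intro p hp q hq hadjp hadjq hpq
    have hmemW' : ∀ r, r ∈ W → G.Adj x r → r ∈ W' := by
      intro r hrW hadjr
      by_cases hrS : r ∈ S
      · exact Finset.mem_union_left _ hrS
      · exact Finset.mem_union_right _
          (Finset.mem_filter.mpr ⟨hrW, hclosed x hxA r hadjr hrW hrS⟩)
    exact hsimp' p (hmemW' p hp hadjp) q (hmemW' q hq hadjq) hadjp hadjq hpq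
  by_cases hKA : ∀ u ∈ K, u ∉ A
  · exact step a0 A ha0A hAdef (fun z hz => (hmemT z).mp hz.1)
      ⟨b0, hb0W, hSa0b0.2, fun hc => hABdisj b0 hc hb0B⟩ hKA
  · push_neg at hKA
    obtain ⟨u, huK, huA⟩ := hKA
    have hKB : ∀ u' ∈ K, u' ∉ B := by
      intro u' hu' hc
      by_cases he : u = u'
      · exact hABdisj u' (he ▸ huA) hc
      · exact hnoedgeAB u huA u' hc (hKclq u huK u' hu' he)
    exact step b0 B hb0B hBdef (fun z hz => (hmemT z).mp hz.1)
      ⟨a0, ha0W, hSa0b0.1, fun hc => hABdisj a0 ha0A hc⟩ hKB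

lemma exists_dominated {V : Type} [Fintype V] [DecidableEq V]
    (G : SimpleGraph V) (hch : IsChordal G) (he : G.edgeSet.Nonempty) :
    ∃ v w : V, G.Adj v w ∧ ∀ x, G.Adj x v → x = w ∨ G.Adj x w := by
  classical
  have hedge : ∃ u v : V, G.Adj u v := by
    obtain ⟨e, he⟩ := he
    induction e using Sym2.ind with
    | _ u v => exact ⟨u, v, he⟩
  obtain ⟨u0, v0, huv⟩ := hedge
  set W : Finset V := Finset.univ.filter (fun z => ∃ u, G.Adj z u) with hW
  obtain ⟨x, hxW, -, hsimp⟩ := dirac_aux G hch W.card W ∅ rfl (Finset.empty_subset _)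
    (fun p hp => absurd hp (Finset.notMem_empty p))
    ⟨u0, Finset.mem_filter.mpr ⟨Finset.mem_univ _, ⟨v0, huv⟩⟩, Finset.notMem_empty u0⟩
  obtain ⟨w, hxw⟩ := (Finset.mem_filter.mp hxW).2
  refine ⟨x, w, hxw, ?_⟩
  intro z hzx
  by_cases hzw : z = w
  · exact Or.inl hzw
  · right
    have hzW : z ∈ W := Finset.mem_filter.mpr ⟨Finset.mem_univ _, ⟨x, hzx⟩⟩
    have hwW : w ∈ W := Finset.mem_filter.mpr ⟨Finset.mem_univ _, ⟨x, hxw.symm⟩⟩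
    exact hsimp z hzW w hwW hzx.symm hxw hzw

/-- Lemma 4.8: for a chordal graph `G` with at least one edge, there is a non-isolated
vertex `w` such that `N(Ḡ)` collapses to `N(complement of G - w)` and
`α(G) = α(G - w)`. -/
theorem chordal_collapse_step {V : Type} [Fintype V] [DecidableEq V]
    (G : SimpleGraph V) (hch : IsChordal G) (he : G.edgeSet.Nonempty) :
    ∃ w : V, (∃ u : V, G.Adj w u) ∧
      Collapses (nbdCpx Gᶜ) (nbdCpxDel G w) ∧
      indNum G = indNum (G.induce {u : V | u ≠ w}) := by
  obtain ⟨v, w, hadj, hdom⟩ := exists_dominated G hch he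
  have hvw : v ≠ w := hadj.ne
  -- key complement fact
  have hkey : ∀ x, Gᶜ.Adj x w → Gᶜ.Adj x v := by
    intro x hx
    rw [compl_adj] at hx ⊢
    obtain ⟨hxw, hnadj⟩ := hx
    constructor
    · rintro rfl; exact hnadj hadj
    · intro hxv
      rcases hdom x hxv with h | h
      · exact hxw h
      · exact hnadj h
  refine ⟨w, ⟨v, hadj.symm⟩, ?_, ?_⟩
  · -- collapsing
    apply collapse_aux w v hvw {σ : Finset V | (nbdCpx Gᶜ).faces σ ∧ w ∈ σ}.ncard
    · rintro σ ⟨u, hu⟩ hw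
      refine ⟨u, fun t ht => ?_⟩
      rcases Finset.mem_union.mp ht with h | h
      · exact hu t h
      · rw [Finset.mem_singleton.mp h]
        exact (hkey u ((hu w hw))).symm.symm
    · intro σ
      constructor
      · rintro ⟨hw, u, huw, h⟩
        refine ⟨⟨u, fun t ht => ?_⟩, hw⟩
        obtain ⟨h1, h2⟩ := h t ht
        rw [compl_adj]
        exact ⟨fun hc => h1 hc.symm, fun hc => h2 hc.symm⟩
      · rintro ⟨⟨u, hu⟩, hw⟩
        by_cases huw : u = w
        · refine ⟨hw, v, hvw, fun t ht => ?_⟩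
          have h1 : Gᶜ.Adj t v := hkey t (huw ▸ (hu t ht)).symm
          rw [compl_adj] at h1
          exact h1
        · refine ⟨hw, u, huw, fun t ht => ?_⟩
          have h1 := (hu t ht).symm
          rw [compl_adj] at h1
          exact h1
    · exact le_refl _
  · -- independence number
    unfold indNum
    congr 1
    ext k
    simp only [Set.mem_setOf_eq]
    constructor
    · rintro ⟨s, hindep, hcard⟩
      suffices h2 : ∃ s₂ : Finset V, (∀ u ∈ s₂, ∀ x ∈ s₂, ¬ G.Adj u x) ∧ s₂.card = k ∧
          ∀ x ∈ s₂, x ≠ w by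
        obtain ⟨s₂, hs₂indep, hs₂card, hs₂w⟩ := h2
        refine ⟨s₂.attach.map ⟨fun x => ⟨x.1, hs₂w x.1 x.2⟩, ?_⟩, ?_, ?_⟩
        · intro a b h
          have h2 := congrArg Subtype.val h
          exact Subtype.ext h2
        · rintro u hu x hx
          simp only [Finset.mem_map, Finset.mem_attach, true_and,
            Function.Embedding.coeFn_mk] at hu hx
          obtain ⟨⟨u', hu'⟩, rfl⟩ := hu
          obtain ⟨⟨x', hx'⟩, rfl⟩ := hx
          exact hs₂indep u' hu' x' hx'
        · rw [Finset.card_map, Finset.card_attach]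
          exact hs₂card
      by_cases hws : w ∈ s
      · have hvs : v ∉ s := fun hvs => hindep v hvs w hws hadj
        have hvse : v ∉ s.erase w := fun hc => hvs (Finset.mem_erase.mp hc).2
        have haux : ∀ x ∈ s.erase w, ¬ G.Adj v x := by
          intro x hx hvx
          rcases hdom x hvx.symm with h | h
          · exact (Finset.mem_erase.mp hx).1 h
          · exact hindep x (Finset.mem_erase.mp hx).2 w hws h
        refine ⟨insert v (s.erase w), ?_, ?_, ?_⟩
        · intro u hu x hx
          rcases Finset.mem_insert.mp hu with hu | hu
          · subst hu
            rcases Finset.mem_insert.mp hx with hx | hx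
            · subst hx; exact fun hc => G.irrefl hc
            · exact haux x hx
          · rcases Finset.mem_insert.mp hx with hx | hx
            · exact fun hc => haux u hu (hx ▸ hc).symm
            · exact hindep u (Finset.mem_erase.mp hu).2 x (Finset.mem_erase.mp hx).2
        · rw [Finset.card_insert_of_notMem hvse, Finset.card_erase_of_mem hws]
          have : 1 ≤ s.card := Finset.card_pos.mpr ⟨w, hws⟩
          omega
        · intro x hx
          rcases Finset.mem_insert.mp hx with hx | hx
          · subst hx; exact hvw
          · exact (Finset.mem_erase.mp hx).1
      · exact ⟨s, hindep, hcard, fun x hx h => hws (h ▸ hx)⟩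
    · rintro ⟨s, hindep, hcard⟩
      refine ⟨s.map ⟨Subtype.val, Subtype.val_injective⟩, ?_, by rw [Finset.card_map]; exact hcard⟩
      rintro u hu x hx
      simp only [Finset.mem_map, Function.Embedding.coeFn_mk] at hu hx
      obtain ⟨u', hu', rfl⟩ := hu
      obtain ⟨x', hx', rfl⟩ := hx
      exact hindep u' hu' x' hx'
end

section
/- Let k and n be non-negative integers with k ≤ n, and let ∂Δ(n,k) be the simplicial complex with underlying set {0,1,…,n} whose faces are exactly the proper subsets of {0,1,…,k}. Then the combinatorial Alexander dual (∂Δ(n,k))^∨ is homotopy equivalent to the sphere S^{n−k−1}. -/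
open SimpleGraph

/-- The combinatorial Alexander dual of a simplicial complex: the faces are the
subsets whose complement is a non-face. -/
def Cplx.dual {V : Type} [Fintype V] [DecidableEq V] (K : Cplx V) : Cplx V where
  faces σ := ¬ K.faces σᶜ
  down_closed := by
    intro σ τ hst h hc
    exact h (K.down_closed (Finset.compl_subset_compl.2 hst) hc)

open Classical in
/-- The geometric realization of a simplicial complex, as a subspace of `V → ℝ`. -/
def Cplx.space {V : Type} [Fintype V] (K : Cplx V) : Type :=
  {f : V → ℝ // (∑ v, f v = 1) ∧ (∀ v, 0 ≤ f v) ∧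
    K.faces (Finset.univ.filter fun v => f v ≠ 0)}

instance {V : Type} [Fintype V] (K : Cplx V) : TopologicalSpace K.space :=
  instTopologicalSpaceSubtype

/-- The simplicial complex `∂Δ(n,k)` on the underlying set `{0, 1, …, n}` whose faces
are exactly the proper subsets of `{0, 1, …, k}`. -/
def bdSimplex (n k : ℕ) : Cplx (Fin (n + 1)) where
  faces σ := σ ⊂ Finset.univ.filter (fun i : Fin (n + 1) => (i : ℕ) ≤ k)
  down_closed := by
    intro σ τ hst h
    exact Finset.ssubset_of_subset_of_ssubset hst h

/-! ### Auxiliary: the frontier of the standard simplex is homeomorphic to the sphere -/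

noncomputable section AuxSphere

open Metric

variable {m : ℕ}

/-- The standard (solid) simplex in `ℝ^m`. -/
def Dset (m : ℕ) : Set (EuclideanSpace ℝ (Fin m)) := {x | (∀ i, 0 ≤ x i) ∧ ∑ i, x i ≤ 1}

/-- The boundary of the standard simplex in `ℝ^m`. -/
def Tset (m : ℕ) : Set (EuclideanSpace ℝ (Fin m)) :=
  {x | ((∀ i, 0 ≤ x i) ∧ ∑ i, x i ≤ 1) ∧ (∑ i, x i = 1 ∨ ∃ i, x i = 0)}

lemma convex_Dset : Convex ℝ (Dset m) := by
  intro x hx y hy a b ha hb hab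
  refine ⟨fun i => ?_, ?_⟩
  · have : (a • x + b • y) i = a * x i + b * y i := rfl
    rw [this]
    exact add_nonneg (mul_nonneg ha (hx.1 i)) (mul_nonneg hb (hy.1 i))
  · have : ∀ i, (a • x + b • y) i = a * x i + b * y i := fun _ => rfl
    calc ∑ i, (a • x + b • y) i = a * ∑ i, x i + b * ∑ i, y i := by
          simp only [this, Finset.sum_add_distrib, Finset.mul_sum]
      _ ≤ a * 1 + b * 1 := by
          gcongr
          exacts [hx.2, hy.2]
      _ = 1 := by rw [mul_one, mul_one, hab]

lemma continuous_coord (i : Fin m) : Continuous fun x : EuclideanSpace ℝ (Fin m) => x i :=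
  (continuous_apply i).comp (PiLp.continuous_ofLp 2 _)

lemma isClosed_Dset : IsClosed (Dset m) := by
  have h1 : IsClosed {x : EuclideanSpace ℝ (Fin m) | ∀ i, 0 ≤ x i} := by
    rw [Set.setOf_forall]
    exact isClosed_iInter fun i => isClosed_le continuous_const (continuous_coord i)
  have h2 : IsClosed {x : EuclideanSpace ℝ (Fin m) | ∑ i, x i ≤ 1} :=
    isClosed_le (by exact continuous_finset_sum _ fun i _ => continuous_coord i) continuous_const
  exact h1.inter h2

lemma bounded_Dset : Bornology.IsBounded (Dset m) := by
  refine (Metric.isBounded_closedBall (x := (0 : EuclideanSpace ℝ (Fin m))) (r := 1)).subset ?_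
  intro x hx
  simp only [Metric.mem_closedBall, dist_zero_right]
  rw [EuclideanSpace.norm_eq]
  rw [show (1:ℝ) = Real.sqrt 1 by simp]
  refine Real.sqrt_le_sqrt ?_
  have hx1 : ∀ i, x i ≤ 1 := fun i =>
    le_trans (Finset.single_le_sum (fun j _ => hx.1 j) (Finset.mem_univ i)) hx.2
  calc ∑ i, ‖x i‖ ^ 2 ≤ ∑ i, x i := by
        refine Finset.sum_le_sum fun i _ => ?_
        rw [Real.norm_eq_abs, sq_abs]
        nlinarith [hx.1 i, hx1 i]
    _ ≤ 1 := hx.2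

lemma interior_Dset (hm : 1 ≤ m) :
    interior (Dset m) = {x | (∀ i, 0 < x i) ∧ ∑ i, x i < 1} := by
  apply le_antisymm
  · intro x hx
    obtain ⟨ε, hε, hball⟩ := Metric.isOpen_iff.1 isOpen_interior x hx
    have hball' : ball x ε ⊆ Dset m := hball.trans interior_subset
    have key : ∀ (v : EuclideanSpace ℝ (Fin m)), ‖v‖ < ε → x + v ∈ Dset m := by
      intro v hv
      apply hball'
      simp [Metric.mem_ball, dist_eq_norm, hv]
    constructor
    · intro i
      have := (key (-(EuclideanSpace.single i (ε/2))) (by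
        rw [norm_neg, EuclideanSpace.norm_single]
        simp [abs_of_pos hε]; linarith)).1 i
      have hsi : (x + -(EuclideanSpace.single i (ε/2))) i = x i - ε/2 := by
        simp [EuclideanSpace.single_apply, sub_eq_add_neg]
      rw [hsi] at this
      linarith
    · obtain ⟨i0⟩ : Nonempty (Fin m) := ⟨⟨0, hm⟩⟩
      have := (key (EuclideanSpace.single i0 (ε/2)) (by
        rw [EuclideanSpace.norm_single]; simp [abs_of_pos hε]; linarith)).2
      have hs : ∑ i, (x + EuclideanSpace.single i0 (ε/2)) i = (∑ i, x i) + ε/2 := by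
        have : ∀ i, (x + EuclideanSpace.single i0 (ε/2)) i
            = x i + (EuclideanSpace.single i0 (ε/2) : EuclideanSpace ℝ (Fin m)) i := fun _ => rfl
        rw [Finset.sum_congr rfl fun i _ => this i, Finset.sum_add_distrib]
        congr 1
        simp [EuclideanSpace.single_apply]
      rw [hs] at this
      linarith
  · intro x hx
    have hopen : IsOpen {x : EuclideanSpace ℝ (Fin m) | (∀ i, 0 < x i) ∧ ∑ i, x i < 1} := by
      have e1 : IsOpen {x : EuclideanSpace ℝ (Fin m) | ∀ i, 0 < x i} := by
        rw [Set.setOf_forall]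
        exact isOpen_iInter_of_finite fun i => isOpen_lt continuous_const (continuous_coord i)
      have e2 : IsOpen {x : EuclideanSpace ℝ (Fin m) | ∑ i, x i < 1} :=
        isOpen_lt (by exact continuous_finset_sum _ fun i _ => continuous_coord i) continuous_const
      exact e1.inter e2
    refine interior_maximal (fun y hy => ?_) hopen hx
    exact ⟨fun i => (hy.1 i).le, hy.2.le⟩

lemma frontier_Dset (hm : 1 ≤ m) : frontier (Dset m) = Tset m := by
  rw [isClosed_Dset.frontier_eq, interior_Dset hm]
  ext x
  simp only [Set.mem_diff, Set.mem_setOf_eq, Dset, Tset, not_and_or, not_forall, not_lt]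
  constructor
  · rintro ⟨⟨h0, h1⟩, h⟩
    refine ⟨⟨h0, h1⟩, ?_⟩
    rcases h with ⟨i, hi⟩ | hs
    · exact Or.inr ⟨i, le_antisymm hi (h0 i)⟩
    · exact Or.inl (le_antisymm h1 hs)
  · rintro ⟨⟨h0, h1⟩, h⟩
    refine ⟨⟨h0, h1⟩, ?_⟩
    rcases h with hs | ⟨i, hi⟩
    · exact Or.inr hs.ge
    · exact Or.inl ⟨i, hi.le⟩

lemma nonempty_interior_Dset (hm : 1 ≤ m) : (interior (Dset m)).Nonempty := by
  rw [interior_Dset hm]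
  refine ⟨WithLp.toLp 2 (fun _ => 1 / (2 * m) : Fin m → ℝ), fun i => by simp only [PiLp.toLp_apply]; positivity, ?_⟩
  simp only [PiLp.toLp_apply]
  have : ∑ _i : Fin m, (1 / (2 * (m:ℝ))) = m * (1 / (2 * m)) := by
    rw [Finset.sum_const, Finset.card_univ, Fintype.card_fin, nsmul_eq_mul]
  rw [this]
  rw [mul_one_div]
  rw [div_lt_one (by positivity)]
  nlinarith [show (1:ℝ) ≤ (m:ℝ) from Nat.one_le_cast.2 hm]

lemma exists_homeo_frontier_sphere (hm : 1 ≤ m) :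
    Nonempty (↥(Tset m) ≃ₜ Metric.sphere (0 : EuclideanSpace ℝ (Fin m)) 1) := by
  obtain ⟨h, -, -, hf⟩ := exists_homeomorph_image_interior_closure_frontier_eq_unitBall
    convex_Dset (nonempty_interior_Dset hm) bounded_Dset
  exact ⟨(Homeomorph.setCongr (frontier_Dset hm).symm).trans
    ((h.image (frontier (Dset m))).trans (Homeomorph.setCongr hf))⟩

end AuxSphere

/-! ### The realization of the dual complex, and the deformation retraction -/

noncomputable section Main

variable (n k : ℕ)

/-- The nice form of the property defining the realization of the dual complex. -/
def PA (f : Fin (n + 1) → ℝ) : Prop :=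
  (∑ v, f v = 1) ∧ (∀ v, 0 ≤ f v) ∧
    ((∃ i : Fin (n + 1), k < (i : ℕ) ∧ f i = 0) ∨ (∀ i : Fin (n + 1), (i : ℕ) ≤ k → f i = 0))

open Classical in
lemma dual_faces_iff (f : Fin (n + 1) → ℝ) :
    (bdSimplex n k).dual.faces (Finset.univ.filter fun v => f v ≠ 0) ↔
      ((∃ i : Fin (n + 1), k < (i : ℕ) ∧ f i = 0) ∨
        (∀ i : Fin (n + 1), (i : ℕ) ≤ k → f i = 0)) := by
  show ¬ ((Finset.univ.filter fun v => f v ≠ 0)ᶜ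
      ⊂ Finset.univ.filter (fun i : Fin (n + 1) => (i : ℕ) ≤ k)) ↔ _
  rw [Finset.compl_filter, Finset.ssubset_iff_subset_ne]
  have hmemZ : ∀ i : Fin (n + 1),
      i ∈ Finset.univ.filter (fun v : Fin (n + 1) => ¬ f v ≠ 0) ↔ f i = 0 := by
    intro i; simp [Finset.mem_filter]
  have hmemF : ∀ i : Fin (n + 1),
      i ∈ Finset.univ.filter (fun i : Fin (n + 1) => (i : ℕ) ≤ k) ↔ (i : ℕ) ≤ k := by
    intro i; simp [Finset.mem_filter]
  rw [not_and_or, not_ne_iff]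
  constructor
  · rintro (hns | heq)
    · obtain ⟨i, hiZ, hiF⟩ := Finset.not_subset.1 hns
      exact Or.inl ⟨i, not_le.1 ((hmemF i).not.1 hiF), (hmemZ i).1 hiZ⟩
    · refine Or.inr fun i hik => (hmemZ i).1 ?_
      rw [heq]; exact (hmemF i).2 hik
  · rintro (⟨i, hik, hi0⟩ | hall)
    · refine Or.inl (Finset.not_subset.2 ⟨i, (hmemZ i).2 hi0, (hmemF i).not.2 (not_le.2 hik)⟩)
    · by_cases hsub : Finset.univ.filter (fun v : Fin (n + 1) => ¬ f v ≠ 0)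
          ⊆ Finset.univ.filter (fun i : Fin (n + 1) => (i : ℕ) ≤ k)
      · refine Or.inr (Finset.Subset.antisymm hsub fun i hi => (hmemZ i).2 (hall i ((hmemF i).1 hi)))
      · exact Or.inl hsub

open Classical in
lemma space_prop_iff (f : Fin (n + 1) → ℝ) :
    ((∑ v, f v = 1) ∧ (∀ v, 0 ≤ f v) ∧
      (bdSimplex n k).dual.faces (Finset.univ.filter fun v => f v ≠ 0)) ↔ PA n k f := by
  unfold PA
  rw [dual_faces_iff]

/-- Sum of the coordinates in `A = {0,…,k}`. -/
def SA (f : Fin (n + 1) → ℝ) : ℝ :=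
  ∑ j ∈ Finset.univ.filter (fun j : Fin (n + 1) => (j : ℕ) ≤ k), f j

/-- Sum of the coordinates in `B = {k+1,…,n}`. -/
def SB (f : Fin (n + 1) → ℝ) : ℝ :=
  ∑ j ∈ Finset.univ.filter (fun j : Fin (n + 1) => ¬ (j : ℕ) ≤ k), f j

lemma SA_add_SB (f : Fin (n + 1) → ℝ) : SA n k f + SB n k f = ∑ v, f v :=
  Finset.sum_filter_add_sum_filter_not _ _ _

lemma SA_nonneg {f : Fin (n + 1) → ℝ} (hf : ∀ v, 0 ≤ f v) : 0 ≤ SA n k f :=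
  Finset.sum_nonneg fun j _ => hf j

lemma SB_nonneg {f : Fin (n + 1) → ℝ} (hf : ∀ v, 0 ≤ f v) : 0 ≤ SB n k f :=
  Finset.sum_nonneg fun j _ => hf j

/-- The retraction pushing all the mass on `{1,…,k}` to the vertex `0`. -/
def Rmap (f : Fin (n + 1) → ℝ) : Fin (n + 1) → ℝ := fun i =>
  if (i : ℕ) ≤ k then (if i = 0 then SA n k f else 0) else f i

lemma sum_Rmap (f : Fin (n + 1) → ℝ) : ∑ v, Rmap n k f v = ∑ v, f v := by
  rw [← Finset.sum_filter_add_sum_filter_not Finset.univ (fun j : Fin (n + 1) => (j : ℕ) ≤ k)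
    (Rmap n k f), ← SA_add_SB]
  congr 1
  · have h1 : ∀ i ∈ Finset.univ.filter (fun j : Fin (n + 1) => (j : ℕ) ≤ k),
        Rmap n k f i = if i = 0 then SA n k f else 0 := by
      intro i hi
      rw [Finset.mem_filter] at hi
      simp [Rmap, hi.2]
    rw [Finset.sum_congr rfl h1, Finset.sum_ite_eq' _ (0 : Fin (n + 1)) (fun _ => SA n k f)]
    rw [if_pos]
    simp [Finset.mem_filter]
  · refine Finset.sum_congr rfl fun i hi => ?_
    rw [Finset.mem_filter] at hi
    simp [Rmap, hi.2]

/-- The property defining `Xb`: the boundary of the simplex on `{0} ∪ B`. -/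
def P' (f : Fin (n + 1) → ℝ) : Prop :=
  (∑ v, f v = 1) ∧ (∀ v, 0 ≤ f v) ∧
    (∀ i : Fin (n + 1), 0 < (i : ℕ) → (i : ℕ) ≤ k → f i = 0) ∧
    ((∃ i : Fin (n + 1), k < (i : ℕ) ∧ f i = 0) ∨ f 0 = 0)

def Xb (n k : ℕ) : Type := {f : Fin (n + 1) → ℝ // P' n k f}

instance : TopologicalSpace (Xb n k) := instTopologicalSpaceSubtype

lemma SA_eq_zero {f : Fin (n + 1) → ℝ} (h : ∀ i : Fin (n + 1), (i : ℕ) ≤ k → f i = 0) :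
    SA n k f = 0 := by
  refine Finset.sum_eq_zero fun j hj => ?_
  rw [Finset.mem_filter] at hj
  exact h j hj.2

lemma Rmap_mem {f : Fin (n + 1) → ℝ} (hf : PA n k f) : P' n k (Rmap n k f) := by
  obtain ⟨hsum, hpos, hface⟩ := hf
  refine ⟨by rw [sum_Rmap, hsum], ?_, ?_, ?_⟩
  · intro v
    unfold Rmap
    split_ifs
    · exact SA_nonneg n k hpos
    · exact le_refl 0
    · exact hpos v
  · intro i hi0 hik
    have : i ≠ 0 := by
      intro h; rw [h] at hi0; simp at hi0
    simp [Rmap, hik, this]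
  · rcases hface with ⟨i, hik, hi0⟩ | hall
    · refine Or.inl ⟨i, hik, ?_⟩
      simp [Rmap, not_le.2 hik, hi0]
    · refine Or.inr ?_
      have h0 : ((0 : Fin (n + 1)) : ℕ) ≤ k := by simp
      simp [Rmap, h0, SA_eq_zero n k hall]

lemma P'_imp_PA {f : Fin (n + 1) → ℝ} (hf : P' n k f) : PA n k f := by
  obtain ⟨hsum, hpos, hmid, hlast⟩ := hf
  refine ⟨hsum, hpos, ?_⟩
  rcases hlast with h | h0
  · exact Or.inl h
  · refine Or.inr fun i hik => ?_
    by_cases hi : (i : ℕ) = 0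
    · have : i = 0 := by
        ext; simpa using hi
      rw [this]; exact h0
    · exact hmid i (Nat.pos_of_ne_zero hi) hik

lemma SA_eq_f0 {f : Fin (n + 1) → ℝ}
    (hmid : ∀ i : Fin (n + 1), 0 < (i : ℕ) → (i : ℕ) ≤ k → f i = 0) :
    SA n k f = f 0 := by
  refine Finset.sum_eq_single_of_mem 0 (by simp [Finset.mem_filter]) fun j hj hj0 => ?_
  rw [Finset.mem_filter] at hj
  refine hmid j ?_ hj.2
  by_contra h
  exact hj0 (by ext; simpa using Nat.eq_zero_of_not_pos h)

lemma Rmap_eq_self {f : Fin (n + 1) → ℝ} (hf : P' n k f) : Rmap n k f = f := by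
  funext i
  unfold Rmap
  split_ifs with h1 h2
  · rw [h2, SA_eq_f0 n k hf.2.2.1]
  · exact (hf.2.2.1 i (Nat.pos_of_ne_zero fun hh => h2 (by ext; simpa using hh)) h1).symm
  · rfl

/-- The straight-line homotopy between `Rmap` and the identity. -/
def Gmap (t : ℝ) (f : Fin (n + 1) → ℝ) : Fin (n + 1) → ℝ := fun i =>
  (1 - t) * Rmap n k f i + t * f i

lemma PA_Gmap {f : Fin (n + 1) → ℝ} (hf : PA n k f) {t : ℝ} (h0 : 0 ≤ t) (h1 : t ≤ 1) :
    PA n k (Gmap n k t f) := by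
  obtain ⟨hsum, hpos, hface⟩ := hf
  have hRpos := (Rmap_mem n k ⟨hsum, hpos, hface⟩).2.1
  refine ⟨?_, ?_, ?_⟩
  · unfold Gmap
    rw [Finset.sum_add_distrib, ← Finset.mul_sum, ← Finset.mul_sum, sum_Rmap, hsum]
    ring
  · intro v
    exact add_nonneg (mul_nonneg (by linarith) (hRpos v)) (mul_nonneg h0 (hpos v))
  · rcases hface with ⟨i, hik, hi0⟩ | hall
    · refine Or.inl ⟨i, hik, ?_⟩
      unfold Gmap
      have : Rmap n k f i = f i := by simp [Rmap, not_le.2 hik]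
      rw [this, hi0]; ring
    · refine Or.inr fun i hik => ?_
      unfold Gmap
      have h1' : Rmap n k f i = 0 := by
        unfold Rmap
        rw [if_pos hik]
        split_ifs
        · exact SA_eq_zero n k hall
        · rfl
      rw [h1', hall i hik]; ring

lemma continuous_Rmap : Continuous (Rmap n k) := by
  apply continuous_pi
  intro i
  unfold Rmap
  split_ifs
  · exact continuous_finset_sum _ fun j _ => continuous_apply j
  · exact continuous_const
  · exact continuous_apply i

/-- The retraction, as a continuous map from the realization to `Xb`. -/
def retr : C((bdSimplex n k).dual.space, Xb n k) :=
  ⟨fun f => ⟨Rmap n k f.1, Rmap_mem n k ((space_prop_iff n k f.1).1 f.2)⟩,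
    ((continuous_Rmap n k).comp continuous_subtype_val).subtype_mk _⟩

def incl : C(Xb n k, (bdSimplex n k).dual.space) :=
  ⟨fun f => ⟨f.1, (space_prop_iff n k f.1).2 (P'_imp_PA n k f.2)⟩,
    continuous_subtype_val.subtype_mk _⟩

/-- The homotopy between `incl ∘ retr` and the identity. -/
def retrHomotopy : ContinuousMap.Homotopy ((incl n k).comp (retr n k))
    (ContinuousMap.id (bdSimplex n k).dual.space) where
  toFun := fun p => ⟨Gmap n k (p.1 : ℝ) p.2.1,
    (space_prop_iff n k _).2 (PA_Gmap n k ((space_prop_iff n k p.2.1).1 p.2.2)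
      p.1.2.1 p.1.2.2)⟩
  continuous_toFun := by
    refine Continuous.subtype_mk ?_ _
    apply continuous_pi
    intro i
    unfold Gmap
    refine Continuous.add (Continuous.mul ?_ ?_) (Continuous.mul ?_ ?_)
    · exact continuous_const.sub (continuous_subtype_val.comp continuous_fst)
    · exact (continuous_apply i).comp ((continuous_Rmap n k).comp
        (continuous_subtype_val.comp continuous_snd))
    · exact continuous_subtype_val.comp continuous_fst
    · exact (continuous_apply i).comp (continuous_subtype_val.comp continuous_snd)
  map_zero_left := by
    intro f
    refine Subtype.ext (funext fun i => ?_)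
    show (1 - (0:ℝ)) * Rmap n k f.1 i + (0:ℝ) * f.1 i = _
    simp [ContinuousMap.comp, retr, incl]
    rfl
  map_one_left := by
    intro f
    refine Subtype.ext (funext fun i => ?_)
    show (1 - (1:ℝ)) * Rmap n k f.1 i + (1:ℝ) * f.1 i = _
    ring_nf
    rfl

/-- Step 1: the realization of the dual complex is homotopy equivalent to `Xb`. -/
def he1 : ContinuousMap.HomotopyEquiv (bdSimplex n k).dual.space (Xb n k) where
  toFun := retr n k
  invFun := incl n k
  left_inv := ⟨retrHomotopy n k⟩
  right_inv := by
    have : (retr n k).comp (incl n k) = ContinuousMap.id (Xb n k) := by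
      refine ContinuousMap.ext fun f => Subtype.ext ?_
      exact Rmap_eq_self n k f.2
    rw [this]

/-! ### Step 2: `Xb` is homeomorphic to the boundary of the standard simplex -/

def embB (i : Fin (n - k)) : Fin (n + 1) := ⟨k + 1 + i.1, by have := i.2; omega⟩

def phiRaw (f : Fin (n + 1) → ℝ) : EuclideanSpace ℝ (Fin (n - k)) :=
  WithLp.toLp 2 fun j => f (embB n k j)

def psiRaw (x : EuclideanSpace ℝ (Fin (n - k))) : Fin (n + 1) → ℝ := fun i =>
  if h : (i : ℕ) ≤ k then (if i = 0 then 1 - ∑ j, x j else 0)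
  else x ⟨(i : ℕ) - (k + 1), by have := i.2; omega⟩

lemma psiRaw_embB (x : EuclideanSpace ℝ (Fin (n - k))) (j : Fin (n - k)) :
    psiRaw n k x (embB n k j) = x j := by
  unfold psiRaw
  rw [dif_neg (by simp [embB]; omega)]
  refine congrArg x.ofLp ?_
  ext
  simp [embB]

lemma sum_embB (f : Fin (n + 1) → ℝ) :
    ∑ j : Fin (n - k), f (embB n k j) = SB n k f := by
  refine Finset.sum_bij' (fun j _ => embB n k j)
    (fun i hi => ⟨(i : ℕ) - (k + 1), by
      rw [Finset.mem_filter] at hi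
      have h1 := hi.2
      have h2 := i.2
      omega⟩) ?_ ?_ ?_ ?_ ?_
  · intro j _
    simp [Finset.mem_filter, embB]
    omega
  · intro i hi
    exact Finset.mem_univ _
  · intro j _
    ext
    simp [embB]
  · intro i hi
    rw [Finset.mem_filter] at hi
    have h1 := hi.2
    ext
    simp [embB]
    omega
  · intro j _
    rfl

lemma sum_phiRaw (f : Fin (n + 1) → ℝ) : ∑ j, phiRaw n k f j = SB n k f :=
  sum_embB n k f

lemma phi_mem {f : Fin (n + 1) → ℝ} (hf : P' n k f) : phiRaw n k f ∈ Tset (n - k) := by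
  obtain ⟨hsum, hpos, hmid, hlast⟩ := hf
  have hSB : ∑ j, phiRaw n k f j = SB n k f := sum_phiRaw n k f
  refine ⟨⟨fun j => hpos _, ?_⟩, ?_⟩
  · rw [hSB]
    have := SA_add_SB n k f
    have := SA_nonneg n k hpos
    linarith [hsum]
  · rcases hlast with ⟨i, hik, hi0⟩ | h0
    · refine Or.inr ⟨⟨(i : ℕ) - (k + 1), by have := i.2; omega⟩, ?_⟩
      show f (embB n k _) = 0
      have : embB n k ⟨(i : ℕ) - (k + 1), by have := i.2; omega⟩ = i := by
        ext
        simp [embB]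
        omega
      rw [this, hi0]
    · refine Or.inl ?_
      rw [hSB]
      have hSA : SA n k f = 0 := by
        rw [SA_eq_f0 n k hmid, h0]
      have := SA_add_SB n k f
      linarith [hsum]

lemma psi_mem {x : EuclideanSpace ℝ (Fin (n - k))} (hx : x ∈ Tset (n - k)) :
    P' n k (psiRaw n k x) := by
  obtain ⟨⟨hpos, hle⟩, hcond⟩ := hx
  have hSB : SB n k (psiRaw n k x) = ∑ j, x j := by
    rw [← sum_embB]
    exact Finset.sum_congr rfl fun j _ => psiRaw_embB n k x j
  have hSA : SA n k (psiRaw n k x) = 1 - ∑ j, x j := by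
    unfold SA
    have h1 : ∀ i ∈ Finset.univ.filter (fun j : Fin (n + 1) => (j : ℕ) ≤ k),
        psiRaw n k x i = if i = 0 then 1 - ∑ j, x j else 0 := by
      intro i hi
      rw [Finset.mem_filter] at hi
      unfold psiRaw
      rw [dif_pos hi.2]
    rw [Finset.sum_congr rfl h1,
      Finset.sum_ite_eq' _ (0 : Fin (n + 1)) (fun _ => 1 - ∑ j, x j)]
    rw [if_pos]
    simp [Finset.mem_filter]
  refine ⟨?_, ?_, ?_, ?_⟩
  · rw [← SA_add_SB n k (psiRaw n k x), hSA, hSB]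
    ring
  · intro v
    unfold psiRaw
    split_ifs
    · linarith
    · exact le_refl 0
    · exact hpos _
  · intro i hi0 hik
    unfold psiRaw
    rw [dif_pos hik, if_neg]
    intro h
    rw [h] at hi0
    simp at hi0
  · rcases hcond with hs | ⟨j, hj⟩
    · refine Or.inr ?_
      unfold psiRaw
      rw [dif_pos (by simp), if_pos rfl, hs]
      ring
    · refine Or.inl ⟨embB n k j, by simp [embB]; omega, ?_⟩
      rw [psiRaw_embB, hj]

lemma psi_phi {f : Fin (n + 1) → ℝ} (hf : P' n k f) : psiRaw n k (phiRaw n k f) = f := by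
  obtain ⟨hsum, hpos, hmid, hlast⟩ := hf
  funext i
  unfold psiRaw
  split_ifs with h1 h2
  · rw [sum_phiRaw]
    have hSA : SA n k f = f 0 := SA_eq_f0 n k hmid
    have := SA_add_SB n k f
    rw [h2]
    linarith [hsum]
  · exact (hmid i (Nat.pos_of_ne_zero fun hh => h2 (by ext; simpa using hh)) h1).symm
  · show f (embB n k _) = f i
    congr 1
    ext
    simp [embB]
    omega

lemma phi_psi (x : EuclideanSpace ℝ (Fin (n - k))) :
    phiRaw n k (psiRaw n k x) = x := by
  ext j
  exact psiRaw_embB n k x j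

/-- Step 2: `Xb` is homeomorphic to the boundary of the standard simplex. -/
def he2 : Xb n k ≃ₜ ↥(Tset (n - k)) where
  toFun f := ⟨phiRaw n k f.1, phi_mem n k f.2⟩
  invFun x := ⟨psiRaw n k x.1, psi_mem n k x.2⟩
  left_inv f := Subtype.ext (psi_phi n k f.2)
  right_inv x := Subtype.ext (phi_psi n k x.1)
  continuous_toFun := by
    refine Continuous.subtype_mk ?_ _
    have : Continuous fun f : Xb n k => ((WithLp.equiv 2 (Fin (n - k) → ℝ)).symm
        (fun j => f.1 (embB n k j))) :=
      (PiLp.continuous_toLp _ _).comp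
        (continuous_pi fun j => (continuous_apply (embB n k j)).comp continuous_subtype_val)
    exact this
  continuous_invFun := by
    refine Continuous.subtype_mk ?_ _
    apply continuous_pi
    intro i
    unfold psiRaw
    split_ifs
    · exact continuous_const.sub (continuous_finset_sum _ fun j _ =>
        (continuous_coord j).comp continuous_subtype_val)
    · exact continuous_const
    · exact (continuous_coord _).comp continuous_subtype_val

/-! ### The empty case `k = n` -/

/-- A homeomorphism between two empty spaces. -/
def emptyHomeo (X Y : Type*) [TopologicalSpace X] [TopologicalSpace Y]
    [IsEmpty X] [IsEmpty Y] : X ≃ₜ Y where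
  toEquiv := Equiv.equivOfIsEmpty X Y
  continuous_toFun := continuous_iff_continuousAt.2 fun x => isEmptyElim x
  continuous_invFun := continuous_iff_continuousAt.2 fun y => isEmptyElim y

lemma isEmpty_space (hk : k = n) : IsEmpty (bdSimplex n k).dual.space := by
  refine ⟨fun f => ?_⟩
  have pa := (space_prop_iff n k f.1).1 f.2
  obtain ⟨hsum, hpos, hface⟩ := pa
  rcases hface with ⟨i, hik, _⟩ | hall
  · have := i.2
    omega
  · have : ∑ v, f.1 v = 0 := Finset.sum_eq_zero fun i _ => hall i (by have := i.2; omega)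
    rw [this] at hsum
    norm_num at hsum

lemma isEmpty_sphere (hk : k = n) :
    IsEmpty ↥(Metric.sphere (0 : EuclideanSpace ℝ (Fin (n - k))) 1) := by
  refine ⟨fun x => ?_⟩
  have hx := x.2
  rw [Metric.mem_sphere] at hx
  have h0 : x.1 = 0 := by
    ext i
    exact absurd i.2 (by omega)
  rw [h0] at hx
  simp at hx

end Main

/-- Proposition 4.10: for `k ≤ n`, the combinatorial Alexander dual of `∂Δ(n,k)` is
homotopy equivalent to the sphere `S^{n-k-1}`. -/
theorem dual_bdSimplex_homotopyEquiv_sphere (n k : ℕ) (hkn : k ≤ n) :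
    Nonempty (ContinuousMap.HomotopyEquiv (bdSimplex n k).dual.space
      (Metric.sphere (0 : EuclideanSpace ℝ (Fin (n - k))) 1)) := by
  rcases lt_or_eq_of_le hkn with hk | hk
  · have hm : 1 ≤ n - k := by omega
    obtain ⟨hs⟩ := exists_homeo_frontier_sphere hm
    exact ⟨((he1 n k).trans (he2 n k).toHomotopyEquiv).trans hs.toHomotopyEquiv⟩
  · have h1 := isEmpty_space n k hk
    have h2 := isEmpty_sphere n k hk
    exact ⟨(emptyHomeo _ _).toHomotopyEquiv⟩
end

section
/- Let G be a bipartite graph. Then the graph G^⋈ is isomorphic to the cartesian product G × P_2. -/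
open SimpleGraph

/-- The graph `G^⋈`: vertex set `V(G) × {+,-}`, with `(v,+)` adjacent to `(w,-)`
exactly when `w` lies in the closed neighborhood of `v`. -/
def bowtie {V : Type} (G : SimpleGraph V) : SimpleGraph (V × Bool) where
  Adj x y :=
    (x.2 = true ∧ y.2 = false ∧ (y.1 = x.1 ∨ G.Adj x.1 y.1)) ∨
    (x.2 = false ∧ y.2 = true ∧ (x.1 = y.1 ∨ G.Adj y.1 x.1))
  symm := by
    constructor
    rintro x y (h | h)
    · exact Or.inr ⟨h.2.1, h.1, h.2.2⟩
    · exact Or.inl ⟨h.2.1, h.1, h.2.2⟩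
  loopless := by
    constructor
    rintro ⟨a, sa⟩ (⟨h1, h2, _⟩ | ⟨h1, h2, _⟩) <;> simp_all

lemma fin_if_eq (p q : Bool) :
    ((if p then 1 else 0 : Fin 2) = if q then 1 else 0) ↔ p = q := by
  cases p <;> cases q <;> simp

/-- Lemma 5.5: for a bipartite graph `G`, the graph `G^⋈` is isomorphic to the
cartesian product `G × P_2`. -/
theorem bowtie_iso_boxProd_path {V : Type} (G : SimpleGraph V) (h : G.Colorable 2) :
    Nonempty (bowtie G ≃g G.boxProd (pathGraph 2)) := by
  obtain ⟨c⟩ := h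
  classical
  obtain ⟨b, key⟩ : ∃ b : V → Bool, ∀ v w, G.Adj v w → b v ≠ b w := by
    refine ⟨fun v => decide (c v = 0), fun v w hvw hbe => ?_⟩
    have hne := c.valid hvw
    simp only [decide_eq_decide] at hbe
    have h1 : (c v).val < 2 := (c v).isLt
    have h2 : (c w).val < 2 := (c w).isLt
    have hbe' : (c v).val = 0 ↔ (c w).val = 0 := by
      exact ⟨fun hx => congrArg Fin.val (hbe.1 (Fin.ext hx)), fun hx => congrArg Fin.val (hbe.2 (Fin.ext hx))⟩
    exact hne (Fin.ext (by omega))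
  exact ⟨{
    toFun := fun x => (x.1, if xor x.2 (b x.1) then 1 else 0)
    invFun := fun x => (x.1, xor (decide (x.2 = 1)) (b x.1))
    left_inv := by
      rintro ⟨v, s⟩
      cases hbv : b v <;> cases s <;> simp [hbv]
    right_inv := by
      rintro ⟨v, i⟩
      cases hbv : b v <;> fin_cases i <;> simp [hbv]
    map_rel_iff' := by
      rintro ⟨v, s⟩ ⟨w, t⟩
      simp only [Equiv.coe_fn_mk, boxProd_adj, pathGraph_two_eq_top, top_adj, bowtie,
        Prod.mk.injEq, ne_eq, fin_if_eq]
      constructor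
      · rintro (⟨ha, he⟩ | ⟨hne, hvw⟩)
        · have hbne := key v w ha
          have ha' := ha.symm
          cases s <;> cases t <;> cases hbv : b v <;> cases hbw : b w <;> simp_all
        · subst hvw
          cases s <;> cases t <;> simp_all
      · rintro (⟨hs, ht, (hw | ha)⟩ | ⟨hs, ht, (hw | ha)⟩)
        · right; exact ⟨by rw [hw, hs, ht]; cases b v <;> simp, hw.symm⟩
        · subst hs ht; left; refine ⟨ha, ?_⟩
          have := key v w ha
          cases hbv : b v <;> cases hbw : b w <;> simp_all
        · right; exact ⟨by rw [hw, hs, ht]; cases b w <;> simp, hw⟩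
        · subst hs ht; left; refine ⟨ha.symm, ?_⟩
          have := key w v ha
          cases hbv : b v <;> cases hbw : b w <;> simp_all
  }⟩
end
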